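/- arXiv:1310.8328 — 8 statements merged into one kernel-verified Lean document; each statement's English description precedes it below -/
import Mathlib

section
/- The function x ↦ exp(−2V(x)/κ²) is integrable over ℝ if and only if a⁻ > 0 and a⁺ < 0. (Thus the reduced stochastic system has a normalisable steady-state density exactly when the origin corresponds to an attracting sliding region of the piecewise-smooth system.) -/
open MeasureTheory Real Set Filter

/-- `exp (b * x)` with `b > 0` is integrable on `(-∞, c]`. -/
lemma exp_pos_integrableOn_Iic (c : ℝ) {b : ℝ} (hb : 0 < b) :
    MeasureTheory.IntegrableOn (fun x : ℝ => Real.exp (b * x)) (Set.Iic c) := by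
  rw [← (Measure.measurePreserving_neg (volume : Measure ℝ)).integrableOn_comp_preimage
      (Homeomorph.neg ℝ).measurableEmbedding]
  simp only [Function.comp_def, neg_preimage, neg_Iic]
  have : MeasureTheory.IntegrableOn (fun x : ℝ => Real.exp (-b * x)) (Set.Ioi (-c)) :=
    exp_neg_integrableOn_Ioi (-c) hb
  have h2 : MeasureTheory.IntegrableOn (fun x : ℝ => Real.exp (-b * x)) (Set.Ici (-c)) := by
    rwa [integrableOn_Ici_iff_integrableOn_Ioi]
  refine h2.congr_fun (fun x _ => ?_) measurableSet_Ici
  ring_nf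

/-- `exp (-2V/κ²)` is integrable over ℝ iff `a⁻ > 0` and `a⁺ < 0`
(attracting sliding region). -/
theorem stmt1
    (aminus aplus : ℝ) (A : ℝ → ℝ)
    (hAcont : ContinuousOn A (Set.Icc (-1) 1))
    (hAm : A (-1) = aminus) (hAp : A 1 = aplus)
    (φ : ℝ → ℝ)
    (hφ : ∀ u : ℝ, φ u = if u ≤ -1 then aminus else if u < 1 then A u else aplus)
    (V : ℝ → ℝ)
    (hV : ∀ x : ℝ, V x = -∫ v in (-1:ℝ)..x, φ v)
    (κ : ℝ) (hκ : 0 < κ) :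
    MeasureTheory.Integrable (fun x : ℝ => Real.exp (-2 * V x / κ ^ 2)) ↔
      (0 < aminus ∧ aplus < 0) := by
  have hκ2 : (0:ℝ) < κ ^ 2 := by positivity
  have hκne : κ ≠ 0 := ne_of_gt hκ
  set f : ℝ → ℝ := fun x => Real.exp (-2 * V x / κ ^ 2) with hf
  -- φ agrees with constants on the tails and with A on [-1,1]
  have hφm : ∀ u : ℝ, u ≤ -1 → φ u = aminus := fun u hu => by simp [hφ u, hu]
  have hφp : ∀ u : ℝ, 1 ≤ u → φ u = aplus := fun u hu => by
    rw [hφ u, if_neg (by linarith), if_neg (by linarith)]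
  have hφA : Set.EqOn φ A (Set.Icc (-1) 1) := by
    intro v hv
    rcases eq_or_lt_of_le hv.1 with h | h
    · rw [hφ v, if_pos (le_of_eq h.symm), ← h, hAm]
    rcases lt_or_eq_of_le hv.2 with h2 | h2
    · rw [hφ v, if_neg (by linarith), if_pos h2]
    · rw [hφ v, if_neg (by linarith), if_neg (by simp [h2]), h2, hAp]
  -- V on the left tail
  have hVneg : ∀ x : ℝ, x ≤ -1 → V x = -(aminus * (x + 1)) := by
    intro x hx
    rw [hV x]
    have : (∫ v in (-1:ℝ)..x, φ v) = ∫ v in (-1:ℝ)..x, aminus := by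
      apply intervalIntegral.integral_congr
      intro v hv
      apply hφm
      rw [Set.uIcc_of_ge hx] at hv
      exact hv.2
    rw [this, intervalIntegral.integral_const, smul_eq_mul]
    ring
  -- interval integrability of φ on [-1,1]
  have hφcont : ContinuousOn φ (Set.Icc (-1) 1) := hAcont.congr hφA
  have hφint1 : IntervalIntegrable φ volume (-1) 1 := by
    apply ContinuousOn.intervalIntegrable
    rwa [Set.uIcc_of_le (by norm_num : (-1:ℝ) ≤ 1)]
  -- V on the right tail
  have hVpos : ∀ x : ℝ, 1 ≤ x → V x = V 1 - aplus * (x - 1) := by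
    intro x hx
    have hφint2 : IntervalIntegrable φ volume 1 x := by
      apply ContinuousOn.intervalIntegrable
      apply continuousOn_const.congr (f := fun _ => aplus)
      intro v hv
      apply hφp
      rw [Set.uIcc_of_le hx] at hv
      exact hv.1
    have hsplit := intervalIntegral.integral_add_adjacent_intervals hφint1 hφint2
    have h2 : (∫ v in (1:ℝ)..x, φ v) = ∫ v in (1:ℝ)..x, aplus := by
      apply intervalIntegral.integral_congr
      intro v hv
      apply hφp
      rw [Set.uIcc_of_le hx] at hv
      exact hv.1
    rw [hV x, hV 1, ← hsplit, h2, intervalIntegral.integral_const, smul_eq_mul]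
    ring
  constructor
  · -- forward direction
    intro hint
    constructor
    · by_contra h
      push_neg at h  -- aminus ≤ 0
      have hc : Integrable (fun _ : ℝ => (1:ℝ)) (volume.restrict (Set.Iic (-1:ℝ))) := by
        apply Integrable.mono' (hint.restrict (s := Set.Iic (-1:ℝ)))
          aestronglyMeasurable_const
        filter_upwards [ae_restrict_mem measurableSet_Iic] with x hx
        have hVx := hVneg x hx
        have hx1 : x + 1 ≤ 0 := by
          simp only [Set.mem_Iic] at hx; linarith
        have h0 : 0 ≤ aminus * (x + 1) := by nlinarith
        have harg : (0:ℝ) ≤ -2 * V x / κ ^ 2 := by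
          rw [hVx]
          have he : -2 * -(aminus * (x + 1)) = 2 * (aminus * (x + 1)) := by ring
          rw [he]
          exact div_nonneg (by linarith) hκ2.le
        rw [norm_one]
        exact Real.one_le_exp harg
      rw [integrable_const_iff] at hc
      rcases hc with h1 | h2
      · norm_num at h1
      · rw [isFiniteMeasure_restrict, Real.volume_Iic] at h2
        simp at h2
    · by_contra h
      push_neg at h  -- 0 ≤ aplus
      set c : ℝ := Real.exp (-2 * V 1 / κ ^ 2) with hc'
      have hc : Integrable (fun _ : ℝ => c) (volume.restrict (Set.Ioi (1:ℝ))) := by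
        apply Integrable.mono' (hint.restrict (s := Set.Ioi (1:ℝ)))
          aestronglyMeasurable_const
        filter_upwards [ae_restrict_mem measurableSet_Ioi] with x hx
        have hxx : (1:ℝ) < x := hx
        have hVx := hVpos x hxx.le
        have harg : -2 * V 1 / κ ^ 2 ≤ -2 * V x / κ ^ 2 := by
          rw [hVx]
          have hx1 : (0:ℝ) ≤ x - 1 := by linarith
          have h1 : 0 ≤ aplus * (x - 1) := mul_nonneg h hx1
          have h2 : -2 * (V 1 - aplus * (x - 1)) = -2 * V 1 + 2 * (aplus * (x-1)) := by ring
          rw [h2]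
          exact div_le_div_of_nonneg_right (by linarith) hκ2.le
        rw [Real.norm_eq_abs, abs_of_pos (Real.exp_pos _)]
        exact Real.exp_le_exp.mpr harg
      rw [integrable_const_iff] at hc
      rcases hc with h1 | h2
      · exact absurd h1 (ne_of_gt (Real.exp_pos _))
      · rw [isFiniteMeasure_restrict, Real.volume_Ioi] at h2
        simp at h2
  · -- backward direction
    rintro ⟨hm, hp⟩
    rw [← integrableOn_univ, ← Set.Iic_union_Ioi (a := (-1:ℝ)), integrableOn_union,
      ← Set.Ioc_union_Ioi_eq_Ioi (by norm_num : (-1:ℝ) ≤ 1), integrableOn_union]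
    refine ⟨?_, ?_, ?_⟩
    · -- left tail
      set b : ℝ := 2 * aminus / κ ^ 2 with hb'
      have hb : 0 < b := by positivity
      have hmodel : IntegrableOn (fun x : ℝ => Real.exp (b * x) * Real.exp b)
          (Set.Iic (-1:ℝ)) := (exp_pos_integrableOn_Iic (-1) hb).mul_const _
      refine hmodel.congr_fun (fun x hx => ?_) measurableSet_Iic
      show Real.exp (b * x) * Real.exp b = Real.exp (-2 * V x / κ ^ 2)
      rw [hVneg x hx, ← Real.exp_add]
      congr 1
      rw [hb', div_mul_eq_mul_div, ← add_div,
        div_eq_div_iff (ne_of_gt hκ2) (ne_of_gt hκ2)]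
      ring
    · -- middle
      have hVcont : ContinuousOn V (Set.Icc (-1:ℝ) 1) := by
        have hint : IntegrableOn φ (Set.uIcc (-1:ℝ) 1) volume := by
          rw [Set.uIcc_of_le (by norm_num : (-1:ℝ) ≤ 1)]
          exact hφcont.integrableOn_compact isCompact_Icc
        have := (intervalIntegral.continuousOn_primitive_interval hint).neg
        rw [Set.uIcc_of_le (by norm_num : (-1:ℝ) ≤ 1)] at this
        refine this.congr fun x _ => ?_
        rw [hV x]
        rfl
      have hfc : ContinuousOn f (Set.Icc (-1:ℝ) 1) := by
        apply Real.continuous_exp.comp_continuousOn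
        exact (hVcont.const_smul (-2 : ℝ)).div_const _
      exact (hfc.integrableOn_compact isCompact_Icc).mono_set Set.Ioc_subset_Icc_self
    · -- right tail
      set b : ℝ := -2 * aplus / κ ^ 2 with hb'
      have hb : 0 < b := by
        apply div_pos _ hκ2
        linarith
      set C : ℝ := Real.exp ((-2 * V 1 - 2 * aplus) / κ ^ 2) with hC'
      have hmodel : IntegrableOn (fun x : ℝ => Real.exp (-b * x) * C)
          (Set.Ioi (1:ℝ)) := (exp_neg_integrableOn_Ioi 1 hb).mul_const _
      refine hmodel.congr_fun (fun x hx => ?_) measurableSet_Ioi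
      show Real.exp (-b * x) * C = Real.exp (-2 * V x / κ ^ 2)
      rw [hVpos x (le_of_lt hx), hC', ← Real.exp_add]
      congr 1
      have hnb : -b = 2 * aplus / κ ^ 2 := by rw [hb']; ring
      rw [hnb, div_mul_eq_mul_div, ← add_div,
        div_eq_div_iff (ne_of_gt hκ2) (ne_of_gt hκ2)]
      ring
end

section
/- Suppose a⁻ > 0 and a⁺ < 0. Then, as κ → ∞, P(κ) = 4/((1/a⁻ + 1/(−a⁺))·κ²) + O(1/κ⁴); that is, the function κ ↦ P(κ) − 4/((1/a⁻ + 1/(−a⁺))·κ²) is O(κ⁻⁴) as κ → ∞. -/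
open MeasureTheory Real Set Filter Asymptotics

lemma aux_tail_Ioi {b : ℝ} (c : ℝ) (hb : 0 < b) :
    IntegrableOn (fun x => Real.exp (-(b * (x - c)))) (Set.Ioi c) := by
  have h : (fun x => Real.exp (-(b * (x - c))))
      = fun x => Real.exp (b * c) * Real.exp (-b * x) := by
    funext x; rw [← Real.exp_add]; congr 1; ring
  rw [h]
  exact (exp_neg_integrableOn_Ioi c hb).const_mul _

lemma aux_int_Ioi {b : ℝ} (c : ℝ) (hb : 0 < b) :
    ∫ x in Set.Ioi c, Real.exp (-(b * (x - c))) = b⁻¹ := by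
  have h : ∀ x : ℝ, Real.exp (-(b * (x - c)))
      = Real.exp (b * c) * Real.exp (-(b * x)) := by
    intro x; rw [← Real.exp_add]; congr 1; ring
  simp only [h]
  rw [MeasureTheory.integral_const_mul]
  rw [integral_comp_mul_left_Ioi (fun y => Real.exp (-y)) c hb]
  rw [integral_exp_neg_Ioi, smul_eq_mul, ← mul_assoc, mul_comm (Real.exp (b*c)) b⁻¹,
    mul_assoc, ← Real.exp_add]
  simp

lemma aux_tail_Iic {b : ℝ} (c : ℝ) (hb : 0 < b) :
    IntegrableOn (fun x => Real.exp (-(b * (c - x)))) (Set.Iic c) := by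
  have A : MeasurableEmbedding fun x : ℝ => -x :=
    (Homeomorph.neg ℝ).isClosedEmbedding.measurableEmbedding
  have hpre : (fun x : ℝ => -x) ⁻¹' (Set.Iic c) = Set.Ici (-c) := by
    ext x; simp [neg_le]
  have hmap : (volume : Measure ℝ).restrict (Set.Iic c)
      = Measure.map (fun x : ℝ => -x) ((volume : Measure ℝ).restrict (Set.Ici (-c))) := by
    conv_lhs => rw [← Measure.map_neg_eq_self (volume : Measure ℝ)]
    rw [Measure.restrict_map A.measurable measurableSet_Iic, hpre]
  unfold IntegrableOn
  rw [hmap, A.integrable_map_iff]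
  have : ((fun x => Real.exp (-(b * (c - x)))) ∘ fun x : ℝ => -x)
      = fun x => Real.exp (-(b * (x - (-c)))) := by
    funext x; simp only [Function.comp]; congr 1; ring
  rw [this]
  exact (integrableOn_Ici_iff_integrableOn_Ioi).mpr (aux_tail_Ioi (-c) hb)

lemma aux_int_Iic {b : ℝ} (c : ℝ) (hb : 0 < b) :
    ∫ x in Set.Iic c, Real.exp (-(b * (c - x))) = b⁻¹ := by
  have h := integral_comp_neg_Ioi (-c) (fun x => Real.exp (-(b * (c - x))))
  rw [neg_neg] at h
  rw [← h]
  have h2 : ∀ x : ℝ, Real.exp (-(b * (c - -x))) = Real.exp (-(b * (x - (-c)))) := by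
    intro x; congr 1; ring
  simp only [h2]
  exact aux_int_Ioi (-c) hb


/-- Large-noise asymptotics of the steady-state occupation probability of the
smoothing region: `P(κ) = 4/((1/a⁻ + 1/(-a⁺)) κ²) + O(κ⁻⁴)` as `κ → ∞`. -/
theorem stmt3
    (aminus aplus : ℝ) (A : ℝ → ℝ)
    (hAcont : ContinuousOn A (Set.Icc (-1) 1))
    (hAm : A (-1) = aminus) (hAp : A 1 = aplus)
    (φ : ℝ → ℝ)
    (hφ : ∀ u : ℝ, φ u = if u ≤ -1 then aminus else if u < 1 then A u else aplus)
    (V : ℝ → ℝ)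
    (hV : ∀ x : ℝ, V x = -∫ v in (-1:ℝ)..x, φ v)
    (ham : 0 < aminus) (hap : aplus < 0)
    (P : ℝ → ℝ)
    (hP : ∀ κ : ℝ, 0 < κ → P κ =
      (∫ u in (-1:ℝ)..1, Real.exp (-2 * V u / κ ^ 2)) /
      (∫ u : ℝ, Real.exp (-2 * V u / κ ^ 2))) :
    (fun κ : ℝ => P κ - 4 / ((1 / aminus + 1 / (-aplus)) * κ ^ 2)) =O[Filter.atTop]
      (fun κ : ℝ => 1 / κ ^ 4) := by
  -- φ is continuous
  have hφc : Continuous φ := by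
    have hproj : Continuous fun u : ℝ => max (-1) (min 1 u) :=
      continuous_const.max (continuous_const.min continuous_id)
    have hrange : ∀ u : ℝ, max (-1) (min 1 u) ∈ Set.Icc (-1:ℝ) 1 := by
      intro u
      constructor
      · exact le_max_left _ _
      · exact max_le (by norm_num) (min_le_left _ _)
    have hB : Continuous fun u : ℝ => A (max (-1) (min 1 u)) :=
      hAcont.comp_continuous hproj hrange
    have heq : φ = fun u : ℝ => A (max (-1) (min 1 u)) := by
      funext u
      rw [hφ u]
      rcases le_or_gt u (-1) with h | h
      · rw [if_pos h, min_eq_right (by linarith : u ≤ (1:ℝ)), max_eq_left h, hAm]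
      · rcases lt_or_ge u 1 with h2 | h2
        · rw [if_neg (not_le.mpr h), if_pos h2, min_eq_right h2.le, max_eq_right h.le]
        · rw [if_neg (not_le.mpr h), if_neg (not_lt.mpr h2), min_eq_left h2,
            max_eq_right (by norm_num : (-1:ℝ) ≤ 1), hAp]
    rw [heq]; exact hB
  -- V is continuous
  have hVc : Continuous V := by
    have h1 : Continuous fun x => ∫ v in (-1:ℝ)..x, φ v :=
      intervalIntegral.continuous_primitive (fun a b => hφc.intervalIntegrable a b) (-1)
    have heq : V = fun x => -∫ v in (-1:ℝ)..x, φ v := funext hV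
    rw [heq]; exact h1.neg
  -- V on the left tail
  have hVleft : ∀ x : ℝ, x ≤ -1 → V x = -(aminus * (x + 1)) := by
    intro x hx
    rw [hV x]
    have h1 : ∫ v in (-1:ℝ)..x, φ v = ∫ v in (-1:ℝ)..x, aminus := by
      apply intervalIntegral.integral_congr
      intro v hv
      rw [Set.uIcc_of_ge hx] at hv
      rw [hφ v, if_pos hv.2]
    rw [h1, intervalIntegral.integral_const, smul_eq_mul]
    ring
  -- V on the right tail
  have hVright : ∀ x : ℝ, 1 ≤ x → V x = V 1 - aplus * (x - 1) := by
    intro x hx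
    have hsplit : (∫ v in (-1:ℝ)..1, φ v) + (∫ v in (1:ℝ)..x, φ v)
        = ∫ v in (-1:ℝ)..x, φ v :=
      intervalIntegral.integral_add_adjacent_intervals (hφc.intervalIntegrable _ _)
        (hφc.intervalIntegrable _ _)
    have h1 : ∫ v in (1:ℝ)..x, φ v = ∫ v in (1:ℝ)..x, aplus := by
      apply intervalIntegral.integral_congr
      intro v hv
      rw [Set.uIcc_of_le hx] at hv
      rw [hφ v, if_neg (by linarith [hv.1] : ¬ v ≤ -1), if_neg (not_lt.mpr hv.1)]
    rw [hV x, ← hsplit, h1, intervalIntegral.integral_const, smul_eq_mul, hV 1]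
    ring
  -- bound for V on [-1, 1]
  obtain ⟨M0, hM0⟩ := (isCompact_Icc : IsCompact (Set.Icc (-1:ℝ) 1)).exists_bound_of_continuousOn
    hVc.continuousOn
  set M : ℝ := max M0 0 with hMdef
  have hMnn' : 0 ≤ M := le_max_right _ _
  have hM : ∀ x ∈ Set.Icc (-1:ℝ) 1, |V x| ≤ M := fun x hx =>
    le_trans (by simpa using hM0 x hx) (le_max_left _ _)
  have hMnn : 0 ≤ M := le_max_right _ _
  clear_value M
  have hV1 : |V 1| ≤ M := hM 1 (by norm_num)
  have hap' : (0:ℝ) < -aplus := neg_pos.mpr hap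
  set L : ℝ := 1 / aminus + 1 / (-aplus) with hLdef
  have hL : 0 < L := by
    rw [hLdef]
    have h1 : 0 < 1 / aminus := by positivity
    have h2 : 0 < 1 / (-aplus) := by positivity
    linarith
  clear_value L
  set C₀ : ℝ := 8 * L * M + (4 * (2 + 8 * M) + 8 * M / (-aplus)) with hC0def
  clear_value C₀
  have hC0nn : 0 ≤ C₀ := by
    have c1 : 0 ≤ 8 * L * M := mul_nonneg (mul_nonneg (by norm_num) hL.le) hMnn
    have c3 : 0 ≤ 8 * M / (-aplus) := div_nonneg (by linarith) hap'.le
    rw [hC0def]; linarith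
  rw [Asymptotics.isBigO_iff]
  refine ⟨2 * aminus * C₀ / L, ?_⟩
  filter_upwards [eventually_ge_atTop (max 1 (2 * M + 1))] with κ hκ
  have hκ1 : (1:ℝ) ≤ κ := le_trans (le_max_left _ _) hκ
  have hκM : 2 * M + 1 ≤ κ := le_trans (le_max_right _ _) hκ
  have hκpos : (0:ℝ) < κ := lt_of_lt_of_le one_pos hκ1
  have htpos : (0:ℝ) < κ ^ 2 := by positivity
  have htM : 2 * M ≤ κ ^ 2 := by nlinarith
  have ht1 : (1:ℝ) ≤ κ ^ 2 := by nlinarith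
  set t : ℝ := κ ^ 2 with htdef
  clear_value t
  set E : ℝ := Real.exp (-2 * V 1 / t) with hEdef
  clear_value E
  have hEpos : 0 < E := by rw [hEdef]; exact Real.exp_pos _
  have hbm : 0 < 2 * aminus / t := div_pos (by linarith) htpos
  have hbp : 0 < 2 * (-aplus) / t := div_pos (by linarith) htpos
  -- the integrand on the tails
  have hfl : ∀ u ∈ Set.Iic (-1:ℝ), Real.exp (-2 * V u / t)
      = Real.exp (-(2 * aminus / t * ((-1) - u))) := by
    intro u hu
    rw [hVleft u hu]
    congr 1
    field_simp [htpos.ne']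
    ring
  have hfr : ∀ u ∈ Set.Ioi (1:ℝ), Real.exp (-2 * V u / t)
      = E * Real.exp (-(2 * (-aplus) / t * (u - 1))) := by
    intro u hu
    rw [hVright u (le_of_lt hu), hEdef, ← Real.exp_add]
    congr 1
    field_simp [htpos.ne', hap.ne]
    ring
  -- integrability and values on the pieces
  have hIl_int : IntegrableOn (fun u => Real.exp (-2 * V u / t)) (Set.Iic (-1:ℝ)) :=
    (aux_tail_Iic (-1) hbm).congr_fun (fun u hu => (hfl u hu).symm) measurableSet_Iic
  have hIl_val : ∫ u in Set.Iic (-1:ℝ), Real.exp (-2 * V u / t) = t / (2 * aminus) := by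
    rw [setIntegral_congr_fun measurableSet_Iic hfl, aux_int_Iic (-1) hbm, inv_div]
  have hIr_int : IntegrableOn (fun u => Real.exp (-2 * V u / t)) (Set.Ioi (1:ℝ)) :=
    IntegrableOn.congr_fun ((aux_tail_Ioi (1:ℝ) hbp).const_mul E)
      (fun u hu => (hfr u hu).symm) measurableSet_Ioi
  have hIr_val : ∫ u in Set.Ioi (1:ℝ), Real.exp (-2 * V u / t)
      = E * (t / (2 * (-aplus))) := by
    rw [setIntegral_congr_fun measurableSet_Ioi hfr, MeasureTheory.integral_const_mul,
      aux_int_Ioi (1:ℝ) hbp, inv_div]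
  have hfc : Continuous fun u => Real.exp (-2 * V u / t) :=
    Real.continuous_exp.comp ((continuous_const.mul hVc).div_const t)
  have hN_int : IntegrableOn (fun u => Real.exp (-2 * V u / t)) (Set.Ioc (-1:ℝ) 1) :=
    hfc.integrableOn_Ioc
  set N : ℝ := ∫ u in Set.Ioc (-1:ℝ) 1, Real.exp (-2 * V u / t) with hNdef
  clear_value N
  have hnum : (∫ u in (-1:ℝ)..1, Real.exp (-2 * V u / t)) = N := by
    rw [intervalIntegral.integral_of_le (by norm_num : (-1:ℝ) ≤ 1), hNdef]
  have hIm_int : IntegrableOn (fun u => Real.exp (-2 * V u / t)) (Set.Ioi (-1:ℝ)) := by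
    rw [← Set.Ioc_union_Ioi_eq_Ioi (by norm_num : (-1:ℝ) ≤ 1)]
    exact hN_int.union hIr_int
  have hD_eq : ∫ u : ℝ, Real.exp (-2 * V u / t)
      = t / (2 * aminus) + (N + E * (t / (2 * (-aplus)))) := by
    rw [← intervalIntegral.integral_Iic_add_Ioi hIl_int hIm_int, hIl_val]
    congr 1
    rw [← Set.Ioc_union_Ioi_eq_Ioi (by norm_num : (-1:ℝ) ≤ 1),
      setIntegral_union (Set.Ioc_disjoint_Ioi le_rfl) measurableSet_Ioi hN_int hIr_int,
      hIr_val, hNdef]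
  -- pointwise estimate in the middle
  have hpt : ∀ x ∈ Set.Icc (-1:ℝ) 1, |Real.exp (-2 * V x / t) - 1| ≤ 4 * M / t := by
    intro x hx
    have h1 : |(-2 * V x / t)| = 2 * |V x| / t := by
      rw [abs_div, abs_of_pos htpos, abs_mul]
      norm_num
    have harg : |(-2 * V x / t)| ≤ 2 * M / t := by
      rw [h1]
      gcongr
      exact hM x hx
    have harg1 : |(-2 * V x / t)| ≤ 1 := by
      refine le_trans harg ?_
      rw [div_le_one htpos]
      linarith
    calc |Real.exp (-2 * V x / t) - 1| ≤ 2 * |(-2 * V x / t)| :=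
          Real.abs_exp_sub_one_le harg1
      _ ≤ 2 * (2 * M / t) := by linarith
      _ = 4 * M / t := by ring
  have hvol : volume (Set.Ioc (-1:ℝ) 1) < ⊤ := measure_Ioc_lt_top
  have hNsub : N - 2 = ∫ u in Set.Ioc (-1:ℝ) 1, (Real.exp (-2 * V u / t) - 1) := by
    rw [integral_sub hN_int (integrableOn_const hvol.ne), hNdef]
    congr 1
    rw [setIntegral_const]
    simp [Real.volume_Ioc]
    norm_num
  have hNbound : |N - 2| ≤ 8 * M / t := by
    rw [hNsub]
    have hle := norm_setIntegral_le_of_norm_le_const (μ := volume)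
      (s := Set.Ioc (-1:ℝ) 1) hvol
      (C := 4 * M / t) (f := fun u => Real.exp (-2 * V u / t) - 1)
      (fun x hx => by
        rw [Real.norm_eq_abs]
        exact hpt x (Set.Ioc_subset_Icc_self hx))
    rw [Real.norm_eq_abs] at hle
    refine le_trans hle ?_
    rw [Real.volume_real_Ioc, show ((1:ℝ) - -1) = 2 from by norm_num,
      max_eq_left (by norm_num : (0:ℝ) ≤ 2)]
    exact le_of_eq (by ring)
  have hNnn : 0 ≤ N := hNdef ▸
    setIntegral_nonneg measurableSet_Ioc (fun x _ => (Real.exp_pos _).le)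
  have hE : |E - 1| ≤ 4 * M / t := by
    have h := hpt 1 (by norm_num)
    rw [← hEdef] at h
    exact h
  have hD_lb : t / (2 * aminus) ≤ ∫ u : ℝ, Real.exp (-2 * V u / t) := by
    rw [hD_eq]
    have : 0 ≤ E * (t / (2 * (-aplus))) :=
      mul_nonneg hEpos.le (div_nonneg htpos.le (by linarith))
    linarith
  set D : ℝ := ∫ u : ℝ, Real.exp (-2 * V u / t) with hDdef
  clear_value D
  have hD_pos : 0 < D := lt_of_lt_of_le (div_pos htpos (by linarith)) hD_lb
  -- final algebra
  rw [hP κ hκpos]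
  rw [← htdef, hnum, ← hDdef]
  have hLt : 0 < L * t := mul_pos hL htpos
  rw [div_sub_div _ _ hD_pos.ne' hLt.ne']
  rw [Real.norm_eq_abs, abs_div, abs_of_pos (mul_pos hD_pos hLt)]
  have hkey : N * (L * t) - D * 4
      = L * t * (N - 2) + (-4 * N + 2 * t * (1 - E) / (-aplus)) := by
    rw [hD_eq, hLdef]
    field_simp [htpos.ne', ham.ne', hap.ne]
    ring
  rw [hkey]
  -- bound the numerator
  have hEbd : |1 - E| ≤ 4 * M / t := by rw [abs_sub_comm]; exact hE
  have h8 : 8 * M / t ≤ 8 * M := div_le_self (by linarith) ht1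
  have hN_ub : N ≤ 2 + 8 * M := by
    have h := (abs_le.mp hNbound).2
    linarith
  have hA1 : |L * t * (N - 2)| ≤ 8 * L * M := by
    rw [abs_mul, abs_of_nonneg hLt.le]
    calc L * t * |N - 2| ≤ L * t * (8 * M / t) := by
          exact mul_le_mul_of_nonneg_left hNbound hLt.le
      _ = 8 * L * M := by field_simp [htpos.ne']
  have hA2 : |(-4 * N + 2 * t * (1 - E) / (-aplus))|
      ≤ 4 * (2 + 8 * M) + 8 * M / (-aplus) := by
    have h2t : |2 * t * (1 - E) / (-aplus)| ≤ 8 * M / (-aplus) := by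
      rw [abs_div, abs_of_pos hap']
      have hnum2 : |2 * t * (1 - E)| ≤ 8 * M := by
        rw [abs_mul, abs_of_nonneg (by linarith : (0:ℝ) ≤ 2 * t)]
        calc 2 * t * |1 - E| ≤ 2 * t * (4 * M / t) :=
              mul_le_mul_of_nonneg_left hEbd (by linarith : (0:ℝ) ≤ 2 * t)
          _ = 8 * M := by field_simp [htpos.ne']; ring
      gcongr
    have h4N : |(-4 * N)| ≤ 4 * (2 + 8 * M) := by
      rw [abs_of_nonpos (by linarith : -4 * N ≤ 0)]
      linarith
    calc |(-4 * N + 2 * t * (1 - E) / (-aplus))|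
        ≤ |(-4 * N)| + |2 * t * (1 - E) / (-aplus)| := abs_add_le _ _
      _ ≤ 4 * (2 + 8 * M) + 8 * M / (-aplus) := by linarith
  have hnum_bound : |L * t * (N - 2) + (-4 * N + 2 * t * (1 - E) / (-aplus))| ≤ C₀ := by
    calc |L * t * (N - 2) + (-4 * N + 2 * t * (1 - E) / (-aplus))|
        ≤ |L * t * (N - 2)| + |(-4 * N + 2 * t * (1 - E) / (-aplus))| := abs_add_le _ _
      _ ≤ C₀ := by rw [hC0def]; linarith
  have hden_lb : (t / (2 * aminus)) * (L * t) ≤ D * (L * t) :=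
    mul_le_mul_of_nonneg_right hD_lb hLt.le
  calc |L * t * (N - 2) + (-4 * N + 2 * t * (1 - E) / (-aplus))| / (D * (L * t))
      ≤ C₀ / ((t / (2 * aminus)) * (L * t)) :=
        div_le_div₀ hC0nn hnum_bound (mul_pos (div_pos htpos (by linarith)) hLt) hden_lb
    _ = 2 * aminus * C₀ / L * ‖1 / κ ^ 4‖ := by
        rw [Real.norm_eq_abs, abs_of_pos (div_pos one_pos (pow_pos hκpos 4)), htdef]
        field_simp [hκpos.ne', ham.ne', hap.ne, hL.ne']
end

section
/- Suppose a⁻ > 0 and a⁺ < 0, and suppose there exists L ∈ (0,2] such that V(u) ≤ V(1) for all u ∈ [1−L, 1]. Then P(κ) ≥ 1 / (1 + (κ²/(2L))·((1/a⁻)·exp(2V(1)/κ²) + 1/(−a⁺))). -/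
open MeasureTheory Real Set Filter

lemma expTail_int_Ioi (b x0 : ℝ) (hb : 0 < b) :
    IntegrableOn (fun x => Real.exp (-b * (x - x0))) (Set.Ioi x0) := by
  have h : (fun x => Real.exp (-b * (x - x0)))
      = fun x => Real.exp (b * x0) * Real.exp (-b * x) := by
    funext x; rw [← Real.exp_add]; ring_nf
  rw [h]
  exact (exp_neg_integrableOn_Ioi x0 hb).const_mul _

lemma expTail_val_Ioi (b x0 : ℝ) (hb : 0 < b) :
    ∫ x in Set.Ioi x0, Real.exp (-b * (x - x0)) = 1 / b := by
  have hderiv : ∀ x ∈ Set.Ici x0, HasDerivAt (fun x => -Real.exp (-b * (x - x0)) / b)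
      (Real.exp (-b * (x - x0))) x := by
    intro x _
    have h1 : HasDerivAt (fun x : ℝ => -b * (x - x0)) (-b) x := by
      simpa using ((hasDerivAt_id x).sub_const x0).const_mul (-b)
    have h2 := (h1.exp).neg.div_const b
    refine h2.congr_deriv ?_
    rw [div_eq_iff hb.ne']; ring
  have htend : Tendsto (fun x => -Real.exp (-b * (x - x0)) / b) atTop (nhds 0) := by
    have h1 : Tendsto (fun x : ℝ => -b * (x - x0)) atTop atBot := by
      have : Tendsto (fun x : ℝ => x - x0) atTop atTop :=
        tendsto_atTop_add_const_right _ (-x0) tendsto_id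
      exact this.const_mul_atTop_of_neg (by linarith)
    have := (tendsto_exp_atBot.comp h1).neg.div_const b
    simpa using this
  rw [integral_Ioi_of_hasDerivAt_of_tendsto' hderiv (expTail_int_Ioi b x0 hb) htend]
  simp [hb.ne']
  ring

lemma expTail_int_Iic (b x0 : ℝ) (hb : 0 < b) :
    IntegrableOn (fun x => Real.exp (b * (x - x0))) (Set.Iic x0) := by
  have A : MeasurableEmbedding fun x : ℝ => -x :=
    (Homeomorph.neg ℝ).isClosedEmbedding.measurableEmbedding
  have h := A.integrableOn_map_iff
    (f := fun x => Real.exp (b * (x - x0))) (s := Set.Iic x0) (μ := volume)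
  rw [Measure.map_neg_eq_self (volume : Measure ℝ)] at h
  rw [h]
  have hpre : (fun x : ℝ => -x) ⁻¹' Set.Iic x0 = Set.Ici (-x0) := by
    ext x; simp [neg_le]
  rw [hpre, integrableOn_Ici_iff_integrableOn_Ioi]
  have : (fun x => Real.exp (b * (x - x0))) ∘ (fun x : ℝ => -x)
      = fun x => Real.exp (-b * (x - (-x0))) := by
    funext x; simp only [Function.comp]; ring_nf
  rw [this]
  exact expTail_int_Ioi b (-x0) hb

lemma expTail_val_Iic (b x0 : ℝ) (hb : 0 < b) :
    ∫ x in Set.Iic x0, Real.exp (b * (x - x0)) = 1 / b := by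
  have h := integral_comp_neg_Iic x0 (fun y => Real.exp (-b * (y - (-x0))))
  have h2 : (fun x : ℝ => Real.exp (-b * (-x - (-x0)))) = fun x => Real.exp (b * (x - x0)) := by
    funext x; ring_nf
  rw [h2] at h
  rw [h, expTail_val_Ioi b (-x0) hb]

set_option maxHeartbeats 1000000 in
/-- Lower bound for the occupation probability `P(κ)` in the sliding case. -/
theorem stmt4
    (aminus aplus : ℝ) (A : ℝ → ℝ)
    (hAcont : ContinuousOn A (Set.Icc (-1) 1))
    (hAm : A (-1) = aminus) (hAp : A 1 = aplus)
    (φ : ℝ → ℝ)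
    (hφ : ∀ u : ℝ, φ u = if u ≤ -1 then aminus else if u < 1 then A u else aplus)
    (V : ℝ → ℝ)
    (hV : ∀ x : ℝ, V x = -∫ v in (-1:ℝ)..x, φ v)
    (ham : 0 < aminus) (hap : aplus < 0)
    (P : ℝ → ℝ)
    (hP : ∀ κ : ℝ, 0 < κ → P κ =
      (∫ u in (-1:ℝ)..1, Real.exp (-2 * V u / κ ^ 2)) /
      (∫ u : ℝ, Real.exp (-2 * V u / κ ^ 2)))
    (L : ℝ) (hL0 : 0 < L) (hL2 : L ≤ 2)
    (hVL : ∀ u ∈ Set.Icc (1 - L) 1, V u ≤ V 1)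
    (κ : ℝ) (hκ : 0 < κ) :
    P κ ≥ 1 / (1 + κ ^ 2 / (2 * L) *
      (1 / aminus * Real.exp (2 * V 1 / κ ^ 2) + 1 / (-aplus))) := by
  have hκ2 : (0:ℝ) < κ ^ 2 := by positivity
  -- φ is continuous
  have hκne : κ ≠ 0 := hκ.ne'
  have hproj : Continuous fun u : ℝ => max (-1) (min 1 u) :=
    continuous_const.max (continuous_const.min continuous_id)
  have hmem : ∀ u : ℝ, max (-1) (min 1 u) ∈ Set.Icc (-1:ℝ) 1 := fun u =>
    ⟨le_max_left _ _, max_le (by norm_num) (min_le_left _ _)⟩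
  have hφeq : ∀ u, φ u = A (max (-1) (min 1 u)) := by
    intro u
    rw [hφ]
    rcases le_or_gt u (-1) with h | h
    · rw [if_pos h, min_eq_right (by linarith : u ≤ (1:ℝ)), max_eq_left h, hAm]
    · rw [if_neg (not_le.mpr h)]
      rcases lt_or_ge u 1 with h2 | h2
      · rw [if_pos h2, min_eq_right h2.le, max_eq_right h.le]
      · rw [if_neg (not_lt.mpr h2), min_eq_left h2, show max (-1:ℝ) 1 = 1 by norm_num, hAp]
  have hφcont : Continuous φ := by
    have h := hAcont.comp_continuous hproj hmem
    exact (funext hφeq : φ = _) ▸ h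
  have hφint : ∀ a b : ℝ, IntervalIntegrable φ volume a b :=
    fun a b => hφcont.intervalIntegrable a b
  -- V is continuous
  have hVcont : Continuous V := by
    have h : Continuous fun x => -(∫ v in (-1:ℝ)..x, φ v) :=
      (intervalIntegral.continuous_primitive hφint (-1)).neg
    exact (funext hV : V = _) ▸ h
  -- values of V on the tails
  have hVneg : ∀ x : ℝ, x ≤ -1 → V x = -aminus * (x + 1) := by
    intro x hx
    rw [hV]
    have h1 : ∫ v in (-1:ℝ)..x, φ v = ∫ v in (-1:ℝ)..x, aminus := by
      apply intervalIntegral.integral_congr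
      intro u hu
      rw [Set.uIcc_of_ge hx] at hu
      rw [hφ, if_pos hu.2]
    rw [h1, intervalIntegral.integral_const, smul_eq_mul]
    ring
  have hVpos : ∀ x : ℝ, 1 ≤ x → V x = V 1 - aplus * (x - 1) := by
    intro x hx
    have hsplit := intervalIntegral.integral_add_adjacent_intervals
      (hφint (-1) 1) (hφint 1 x)
    have h2 : ∫ v in (1:ℝ)..x, φ v = (x - 1) * aplus := by
      have h3 : ∫ v in (1:ℝ)..x, φ v = ∫ v in (1:ℝ)..x, aplus := by
        apply intervalIntegral.integral_congr
        intro u hu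
        rw [Set.uIcc_of_le hx] at hu
        rw [hφ, if_neg (by linarith [hu.1]), if_neg (not_lt.mpr hu.1)]
      rw [h3, intervalIntegral.integral_const, smul_eq_mul]
    rw [hV x, hV 1, ← hsplit, h2]
    ring
  set f : ℝ → ℝ := fun u => Real.exp (-2 * V u / κ ^ 2) with hf
  have hfc : Continuous f := (Real.continuous_exp.comp
    ((continuous_const.mul hVcont).div_const _))
  have hfpos : ∀ u, 0 < f u := fun u => Real.exp_pos _
  set C : ℝ := Real.exp (-2 * V 1 / κ ^ 2) with hC
  have hCpos : 0 < C := Real.exp_pos _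
  set bm : ℝ := 2 * aminus / κ ^ 2 with hbm
  set bp : ℝ := -2 * aplus / κ ^ 2 with hbp
  have hbm0 : 0 < bm := by positivity
  have hbp0 : 0 < bp := by rw [hbp]; apply div_pos (by linarith) hκ2
  -- tails
  have hfIic : Set.EqOn f (fun u => Real.exp (bm * (u - (-1)))) (Set.Iic (-1)) := by
    intro u hu
    simp only [hf]
    rw [hVneg u hu]
    congr 1
    rw [hbm]
    field_simp
    ring
  have hfIoi : Set.EqOn f (fun u => C * Real.exp (-bp * (u - 1))) (Set.Ioi 1) := by
    intro u hu
    simp only [hf, hC]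
    rw [hVpos u (le_of_lt hu), ← Real.exp_add]
    congr 1
    rw [hbp]
    field_simp
    ring
  have hIic : IntegrableOn f (Set.Iic (-1)) :=
    (expTail_int_Iic bm (-1) hbm0).congr_fun (fun u hu => (hfIic hu).symm) measurableSet_Iic
  have hIoi1 : IntegrableOn f (Set.Ioi 1) := by
    have h0 : IntegrableOn (fun u => C * Real.exp (-bp * (u - 1))) (Set.Ioi 1) :=
      (expTail_int_Ioi bp 1 hbp0).const_mul C
    exact h0.congr_fun (fun u hu => (hfIoi hu).symm) measurableSet_Ioi
  have hIoc : IntegrableOn f (Set.Ioc (-1) 1) :=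
    (hfc.integrableOn_Icc).mono_set Set.Ioc_subset_Icc_self
  have hIoi : IntegrableOn f (Set.Ioi (-1)) := by
    rw [show Set.Ioi (-1:ℝ) = Set.Ioc (-1) 1 ∪ Set.Ioi 1 from
      (Set.Ioc_union_Ioi_eq_Ioi (by norm_num)).symm]
    exact hIoc.union hIoi1
  -- tail integral values
  have hvIic : ∫ u in Set.Iic (-1:ℝ), f u = κ ^ 2 / (2 * aminus) := by
    rw [setIntegral_congr_fun measurableSet_Iic hfIic, expTail_val_Iic bm (-1) hbm0]
    rw [hbm, one_div_div]
  have hvIoi : ∫ u in Set.Ioi (1:ℝ), f u = C * (κ ^ 2 / (2 * (-aplus))) := by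
    rw [setIntegral_congr_fun measurableSet_Ioi hfIoi, integral_const_mul,
      expTail_val_Ioi bp 1 hbp0]
    congr 1
    rw [hbp, one_div_div]
    ring
  set I : ℝ := ∫ u in (-1:ℝ)..1, f u with hI
  set J : ℝ := κ ^ 2 / (2 * aminus) + C * (κ ^ 2 / (2 * (-aplus))) with hJ
  have hJ0 : 0 < J := by
    have h1 : (0:ℝ) < κ ^ 2 / (2 * aminus) := by positivity
    have h2 : (0:ℝ) < κ ^ 2 / (2 * (-aplus)) := by
      apply div_pos hκ2; linarith
    rw [hJ]
    nlinarith [mul_pos hCpos h2]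
  -- denominator decomposition
  have hD : ∫ u : ℝ, f u = I + J := by
    rw [← intervalIntegral.integral_Iic_add_Ioi hIic hIoi]
    rw [show Set.Ioi (-1:ℝ) = Set.Ioc (-1) 1 ∪ Set.Ioi 1 from
      (Set.Ioc_union_Ioi_eq_Ioi (by norm_num)).symm,
      setIntegral_union (Set.Ioc_disjoint_Ioi le_rfl) measurableSet_Ioi hIoc hIoi1,
      hvIic, hvIoi, hI, intervalIntegral.integral_of_le (by norm_num : (-1:ℝ) ≤ 1), hJ]
    ring
  -- lower bound on I
  have h1L : (-1:ℝ) ≤ 1 - L := by linarith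
  have hIsplit := intervalIntegral.integral_add_adjacent_intervals
    (hfc.intervalIntegrable (μ := volume) (-1) (1 - L)) (hfc.intervalIntegrable (μ := volume) (1 - L) 1)
  have hpart1 : 0 ≤ ∫ u in (-1:ℝ)..(1 - L), f u :=
    intervalIntegral.integral_nonneg h1L (fun u _ => (hfpos u).le)
  have hpart2 : L * C ≤ ∫ u in (1 - L:ℝ)..1, f u := by
    have hmono : ∫ u in (1 - L:ℝ)..1, C ≤ ∫ u in (1 - L:ℝ)..1, f u := by
      apply intervalIntegral.integral_mono_on (by linarith)
        (intervalIntegrable_const) (hfc.intervalIntegrable (μ := volume) _ _)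
      intro u hu
      simp only [hf, hC]
      apply Real.exp_le_exp.mpr
      rw [div_le_div_iff₀ hκ2 hκ2]
      have := hVL u hu
      nlinarith
    calc L * C = (1 - (1 - L)) * C := by ring
    _ = ∫ u in (1 - L:ℝ)..1, C := by rw [intervalIntegral.integral_const, smul_eq_mul]
    _ ≤ _ := hmono
  have hILC : L * C ≤ I := by
    rw [hI, ← hIsplit]; linarith
  have hLC0 : 0 < L * C := by positivity
  have hI0 : 0 < I := lt_of_lt_of_le hLC0 hILC
  clear_value C I J
  -- final algebra
  rw [hP κ hκ, hD]
  set E : ℝ := Real.exp (2 * V 1 / κ ^ 2) with hE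
  have hE0 : 0 < E := Real.exp_pos _
  have hEC : E * C = 1 := by
    rw [hE, hC, ← Real.exp_add, ← Real.exp_zero]
    congr 1
    field_simp
    ring
  set Dr : ℝ := 1 + κ ^ 2 / (2 * L) * (1 / aminus * E + 1 / (-aplus)) with hDr
  have hDr0 : 0 < Dr := by
    have h1 : (0:ℝ) < κ ^ 2 / (2 * L) := by positivity
    have h2 : (0:ℝ) < 1 / aminus * E := by positivity
    have h3 : (0:ℝ) < 1 / (-aplus) := by
      apply one_div_pos.mpr; linarith
    rw [hDr]
    have := mul_pos h1 (add_pos h2 h3)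
    linarith
  have hE' : E = C⁻¹ := eq_inv_of_mul_eq_one_left hEC
  have hden : Dr * (L * C) = L * C + J := by
    rw [hDr, hJ, hE']
    have hLne : L ≠ 0 := hL0.ne'
    have hamne : aminus ≠ 0 := ham.ne'
    have hapne : aplus ≠ 0 := hap.ne
    field_simp [hLne, hamne, hapne, hCpos.ne']
  clear_value E Dr
  have key : 1 / Dr = (L * C) / (L * C + J) := by
    rw [div_eq_div_iff hDr0.ne' (by nlinarith : (0:ℝ) < L * C + J).ne']
    linear_combination -hden
  rw [ge_iff_le, key]
  rw [div_le_div_iff₀ (by linarith) (by linarith)]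
  nlinarith [mul_le_mul_of_nonneg_right hILC hJ0.le]
end

section
/- Suppose a⁻ > 0 and a⁺ < 0. Then 1 − P(κ) = O(κ²) as κ → 0⁺; that is, there exist constants M > 0 and κ₀ > 0 such that 1 − P(κ) ≤ M·κ² for all 0 < κ < κ₀. -/
open MeasureTheory Real Set Filter

lemma tail_integrableOn_Ioi (c b : ℝ) (hb : 0 < b) :
    IntegrableOn (fun u : ℝ => Real.exp (-b * (u - c))) (Set.Ioi c) := by
  have h : (fun u : ℝ => Real.exp (-b * (u - c)))
      = fun u => Real.exp (b * c) * Real.exp (-b * u) := by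
    funext u; rw [← Real.exp_add]; ring_nf
  rw [h]
  exact (exp_neg_integrableOn_Ioi c hb).const_mul _

lemma tail_integral_Ioi (c b : ℝ) (hb : 0 < b) :
    ∫ u in Set.Ioi c, Real.exp (-b * (u - c)) = 1 / b := by
  have hderiv : ∀ x ∈ Set.Ici c, HasDerivAt (fun u => -(1/b) * Real.exp (-b * (u - c)))
      (Real.exp (-b * (x - c))) x := by
    intro x _
    have h1 : HasDerivAt (fun u : ℝ => -b * (u - c)) (-b) x := by
      simpa using ((hasDerivAt_id x).sub_const c).const_mul (-b)
    have h2 := (h1.exp).const_mul (-(1/b))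
    refine h2.congr_deriv ?_
    have hb0 : b ≠ 0 := hb.ne'
    field_simp
  have htend : Tendsto (fun u => -(1/b) * Real.exp (-b * (u - c))) atTop (nhds 0) := by
    have h1 : Tendsto (fun u : ℝ => -b * (u - c)) atTop atBot := by
      have := (tendsto_atTop_add_const_right atTop (-c) tendsto_id)
      exact Tendsto.const_mul_atTop_of_neg (neg_neg_iff_pos.mpr hb)
        (by simpa [sub_eq_add_neg] using this)
    have h2 := (Real.tendsto_exp_atBot).comp h1
    have := h2.const_mul (-(1/b))
    simpa using this
  rw [integral_Ioi_of_hasDerivAt_of_tendsto' hderiv (tail_integrableOn_Ioi c b hb) htend]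
  simp

lemma tail_integrableOn_Iic (c b : ℝ) (hb : 0 < b) :
    IntegrableOn (fun u : ℝ => Real.exp (b * (u - c))) (Set.Iic c) := by
  have m : MeasurableEmbedding fun x : ℝ => -x :=
    (Homeomorph.neg ℝ).isClosedEmbedding.measurableEmbedding
  rw [← Measure.map_neg_eq_self (volume : Measure ℝ), m.integrableOn_map_iff]
  have h : ((fun u : ℝ => Real.exp (b * (u - c))) ∘ fun x : ℝ => -x)
      = fun x : ℝ => Real.exp (-b * (x - (-c))) := by
    funext x; simp only [Function.comp]; ring_nf
  rw [h]
  have hpre : (fun x : ℝ => -x) ⁻¹' (Set.Iic c) = Set.Ici (-c) := by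
    ext x; simp [neg_le]
  rw [hpre]
  exact (integrableOn_Ici_iff_integrableOn_Ioi).mpr (tail_integrableOn_Ioi (-c) b hb)

lemma tail_integral_Iic (c b : ℝ) (hb : 0 < b) :
    ∫ u in Set.Iic c, Real.exp (b * (u - c)) = 1 / b := by
  have h := integral_comp_neg_Iic c (fun u : ℝ => Real.exp (-b * (u - (-c))))
  have heq : (fun x : ℝ => Real.exp (-b * (-x - (-c)))) = fun x : ℝ => Real.exp (b * (x - c)) := by
    funext x; ring_nf
  rw [heq] at h
  rw [h, tail_integral_Ioi (-c) b hb]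

/-- Small-noise behaviour in the sliding case: `1 - P(κ) = O(κ²)` as `κ → 0⁺`. -/
theorem stmt5
    (aminus aplus : ℝ) (A : ℝ → ℝ)
    (hAcont : ContinuousOn A (Set.Icc (-1) 1))
    (hAm : A (-1) = aminus) (hAp : A 1 = aplus)
    (φ : ℝ → ℝ)
    (hφ : ∀ u : ℝ, φ u = if u ≤ -1 then aminus else if u < 1 then A u else aplus)
    (V : ℝ → ℝ)
    (hV : ∀ x : ℝ, V x = -∫ v in (-1:ℝ)..x, φ v)
    (ham : 0 < aminus) (hap : aplus < 0)
    (P : ℝ → ℝ)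
    (hP : ∀ κ : ℝ, 0 < κ → P κ =
      (∫ u in (-1:ℝ)..1, Real.exp (-2 * V u / κ ^ 2)) /
      (∫ u : ℝ, Real.exp (-2 * V u / κ ^ 2))) :
    ∃ M > (0:ℝ), ∃ κ₀ > (0:ℝ), ∀ κ : ℝ, 0 < κ → κ < κ₀ → 1 - P κ ≤ M * κ ^ 2 := by
  -- φ is the composition of A with the clamp to [-1,1], hence continuous
  have hφA : ∀ u : ℝ, φ u = A (max (-1) (min u 1)) := by
    intro u
    rw [hφ]
    rcases le_or_gt u (-1) with h | h
    · rw [if_pos h, min_eq_left (h.trans (by norm_num)), max_eq_left h, hAm]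
    · rw [if_neg (not_le.mpr h)]
      rcases lt_or_ge u 1 with h2 | h2
      · rw [if_pos h2, min_eq_left h2.le, max_eq_right h.le]
      · rw [if_neg (not_lt.mpr h2), min_eq_right h2, max_eq_right (by norm_num), hAp]
  have hclamp : Continuous fun u : ℝ => max (-1) (min u 1) :=
    continuous_const.max (continuous_id.min continuous_const)
  have hmaps : ∀ u : ℝ, max (-1) (min u 1) ∈ Set.Icc (-1 : ℝ) 1 := by
    intro u
    constructor
    · exact le_max_left _ _
    · exact max_le (by norm_num) (min_le_right _ _)
  have hφcont : Continuous φ := by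
    have : Continuous (A ∘ fun u : ℝ => max (-1) (min u 1)) :=
      hAcont.comp_continuous hclamp hmaps
    exact this.congr fun u => (hφA u).symm
  have hφint : ∀ a b : ℝ, IntervalIntegrable φ volume a b :=
    fun a b => hφcont.intervalIntegrable a b
  have hVcont : Continuous V := by
    have : Continuous fun x => -∫ v in (-1:ℝ)..x, φ v :=
      (intervalIntegral.continuous_primitive hφint (-1)).neg
    exact this.congr fun x => (hV x).symm
  -- V on the left tail
  have hVleft : ∀ x : ℝ, x ≤ -1 → V x = -(aminus * (x + 1)) := by
    intro x hx
    rw [hV]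
    have hcong : ∫ v in (-1:ℝ)..x, φ v = ∫ v in (-1:ℝ)..x, aminus := by
      apply intervalIntegral.integral_congr
      intro v hv
      rw [Set.uIcc_of_ge hx] at hv
      rw [hφ, if_pos hv.2]
    rw [hcong, intervalIntegral.integral_const, smul_eq_mul]
    ring
  -- V on the right tail
  have hVright : ∀ x : ℝ, 1 ≤ x → V x = V 1 - aplus * (x - 1) := by
    intro x hx
    have hsplit : (∫ v in (-1:ℝ)..1, φ v) + (∫ v in (1:ℝ)..x, φ v) = ∫ v in (-1:ℝ)..x, φ v :=
      intervalIntegral.integral_add_adjacent_intervals (hφint _ _) (hφint _ _)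
    have hcong : ∫ v in (1:ℝ)..x, φ v = ∫ v in (1:ℝ)..x, aplus := by
      apply intervalIntegral.integral_congr
      intro v hv
      rw [Set.uIcc_of_le hx] at hv
      rw [hφ, if_neg (by linarith [hv.1]), if_neg (not_lt.mpr hv.1)]
    rw [hV x, hV 1, ← hsplit, hcong, intervalIntegral.integral_const, smul_eq_mul]
    ring
  -- near -1 : φ ≥ 0 on [-1, -1+ε₁]
  have hφm1 : φ (-1) = aminus := by rw [hφ, if_pos le_rfl]
  have hφp1 : φ 1 = aplus := by
    rw [hφ, if_neg (by norm_num), if_neg (lt_irrefl 1)]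
  obtain ⟨δ₁, hδ₁pos, hδ₁⟩ := Metric.continuousAt_iff.mp (hφcont.continuousAt (x := -1))
    (aminus / 2) (half_pos ham)
  obtain ⟨δ₂, hδ₂pos, hδ₂⟩ := Metric.continuousAt_iff.mp (hφcont.continuousAt (x := 1))
    (-aplus / 2) (by linarith)
  set ε₁ : ℝ := min (δ₁ / 2) 1 with hε₁def
  set ε₂ : ℝ := min (δ₂ / 2) 1 with hε₂def
  have hε₁pos : 0 < ε₁ := lt_min (half_pos hδ₁pos) one_pos
  have hε₂pos : 0 < ε₂ := lt_min (half_pos hδ₂pos) one_pos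
  have hε₁le : ε₁ ≤ 1 := min_le_right _ _
  have hε₂le : ε₂ ≤ 1 := min_le_right _ _
  have hφnonneg : ∀ u ∈ Set.Icc (-1 : ℝ) (-1 + ε₁), 0 ≤ φ u := by
    intro u hu
    have hd : dist u (-1) < δ₁ := by
      rw [Real.dist_eq, abs_of_nonneg (by linarith [hu.1])]
      have : ε₁ ≤ δ₁ / 2 := min_le_left _ _
      linarith [hu.2]
    have := hδ₁ hd
    rw [Real.dist_eq, hφm1] at this
    have := abs_lt.mp this
    linarith [this.1]
  have hφnonpos : ∀ u ∈ Set.Icc (1 - ε₂) (1 : ℝ), φ u ≤ 0 := by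
    intro u hu
    have hd : dist u 1 < δ₂ := by
      rw [Real.dist_eq, abs_of_nonpos (by linarith [hu.2])]
      have : ε₂ ≤ δ₂ / 2 := min_le_left _ _
      linarith [hu.1]
    have := hδ₂ hd
    rw [Real.dist_eq, hφp1] at this
    have := abs_lt.mp this
    linarith [this.2]
  -- V ≤ 0 near -1
  have hVneg : ∀ u ∈ Set.Icc (-1 : ℝ) (-1 + ε₁), V u ≤ 0 := by
    intro u hu
    rw [hV]
    have : 0 ≤ ∫ v in (-1:ℝ)..u, φ v := by
      apply intervalIntegral.integral_nonneg hu.1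
      intro x hx
      exact hφnonneg x ⟨hx.1, hx.2.trans hu.2⟩
    linarith
  -- V ≤ V 1 near 1
  have hVle1 : ∀ u ∈ Set.Icc (1 - ε₂) (1 : ℝ), V u ≤ V 1 := by
    intro u hu
    have hsplit : (∫ v in (-1:ℝ)..u, φ v) + (∫ v in u..(1:ℝ), φ v) = ∫ v in (-1:ℝ)..1, φ v :=
      intervalIntegral.integral_add_adjacent_intervals (hφint _ _) (hφint _ _)
    have hle : ∫ v in u..(1:ℝ), φ v ≤ 0 := by
      have h0 : 0 ≤ ∫ v in u..(1:ℝ), -φ v :=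
        intervalIntegral.integral_nonneg hu.2
          (fun x hx => neg_nonneg.mpr (hφnonpos x ⟨hu.1.trans hx.1, hx.2⟩))
      rw [intervalIntegral.integral_neg] at h0
      linarith
    rw [hV u, hV 1]
    linarith
  -- main estimate
  have hMpos : 0 < 1 / (2 * aminus * ε₁) + 1 / (2 * (-aplus) * ε₂) :=
    add_pos (one_div_pos.mpr (mul_pos (mul_pos two_pos ham) hε₁pos))
      (one_div_pos.mpr (mul_pos (mul_pos two_pos (by linarith)) hε₂pos))
  refine ⟨1 / (2 * aminus * ε₁) + 1 / (2 * (-aplus) * ε₂), hMpos, 1, one_pos, ?_⟩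
  intro κ hκ _
  have hκ2 : (0:ℝ) < κ ^ 2 := by positivity
  set g : ℝ → ℝ := fun u => Real.exp (-2 * V u / κ ^ 2) with hgdef
  have hgcont : Continuous g := Real.continuous_exp.comp ((continuous_const.mul hVcont).div_const _)
  have hgpos : ∀ u, 0 < g u := fun u => Real.exp_pos _
  set b₁ : ℝ := 2 * aminus / κ ^ 2 with hb₁
  set b₂ : ℝ := 2 * (-aplus) / κ ^ 2 with hb₂
  have hb₁pos : 0 < b₁ := div_pos (by linarith) hκ2
  have hb₂pos : 0 < b₂ := div_pos (by linarith) hκ2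
  have hgL : ∀ u ∈ Set.Iic (-1:ℝ), g u = Real.exp (b₁ * (u - (-1))) := by
    intro u hu
    rw [hgdef]
    simp only
    rw [hVleft u hu, hb₁]
    congr 1
    field_simp
    ring
  have hgR : ∀ u ∈ Set.Ioi (1:ℝ), g u
      = Real.exp (-2 * V 1 / κ ^ 2) * Real.exp (-b₂ * (u - 1)) := by
    intro u hu
    rw [hgdef]
    simp only
    rw [hVright u (le_of_lt hu), ← Real.exp_add, hb₂]
    congr 1
    field_simp
    ring
  have hLint : IntegrableOn g (Set.Iic (-1)) :=
    (tail_integrableOn_Iic (-1) b₁ hb₁pos).congr_fun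
      (fun u hu => (hgL u hu).symm) measurableSet_Iic
  have hRint : IntegrableOn g (Set.Ioi 1) := by
    have h := (tail_integrableOn_Ioi 1 b₂ hb₂pos).const_mul (Real.exp (-2 * V 1 / κ ^ 2))
    exact IntegrableOn.congr_fun h (fun u hu => (hgR u hu).symm) measurableSet_Ioi
  have hMint : IntegrableOn g (Set.Ioc (-1) 1) :=
    (hgcont.integrableOn_Icc).mono_set Set.Ioc_subset_Icc_self
  have hLval : ∫ u in Set.Iic (-1:ℝ), g u = 1 / b₁ := by
    rw [setIntegral_congr_fun measurableSet_Iic hgL, tail_integral_Iic (-1) b₁ hb₁pos]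
  have hRval : ∫ u in Set.Ioi (1:ℝ), g u = Real.exp (-2 * V 1 / κ ^ 2) * (1 / b₂) := by
    rw [setIntegral_congr_fun measurableSet_Ioi hgR, integral_const_mul _ _,
      tail_integral_Ioi 1 b₂ hb₂pos]
  have hIoi : IntegrableOn g (Set.Ioi (-1:ℝ)) := by
    have h : Set.Ioc (-1:ℝ) 1 ∪ Set.Ioi 1 = Set.Ioi (-1:ℝ) :=
      Set.Ioc_union_Ioi_eq_Ioi (by norm_num)
    rw [← h]
    exact hMint.union hRint
  have hsplit1 : ∫ u, g u = (∫ u in Set.Iic (-1:ℝ), g u) + ∫ u in Set.Ioi (-1:ℝ), g u :=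
    (intervalIntegral.integral_Iic_add_Ioi hLint hIoi).symm
  have hdisj : Disjoint (Set.Ioc (-1:ℝ) 1) (Set.Ioi (1:ℝ)) := by
    apply Set.disjoint_left.mpr
    intro x hx hx'
    exact absurd hx.2 (not_le.mpr hx')
  have hsplit2 : ∫ u in Set.Ioi (-1:ℝ), g u
      = (∫ u in Set.Ioc (-1:ℝ) 1, g u) + ∫ u in Set.Ioi (1:ℝ), g u := by
    rw [← Set.Ioc_union_Ioi_eq_Ioi (show (-1:ℝ) ≤ 1 by norm_num)]
    exact setIntegral_union hdisj measurableSet_Ioi hMint hRint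
  have hIinEq : (∫ u in (-1:ℝ)..1, g u) = ∫ u in Set.Ioc (-1:ℝ) 1, g u :=
    intervalIntegral.integral_of_le (by norm_num)
  -- lower bound 1 : near -1
  have hIin1 : ε₁ ≤ ∫ u in (-1:ℝ)..1, g u := by
    have hsplit : (∫ u in (-1:ℝ)..(-1+ε₁), g u) + (∫ u in (-1+ε₁)..(1:ℝ), g u)
        = ∫ u in (-1:ℝ)..1, g u :=
      intervalIntegral.integral_add_adjacent_intervals
        (hgcont.intervalIntegrable _ _) (hgcont.intervalIntegrable _ _)
    have h1 : ε₁ ≤ ∫ u in (-1:ℝ)..(-1+ε₁), g u := by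
      have hle : ∀ u ∈ Set.Icc (-1:ℝ) (-1+ε₁), (1:ℝ) ≤ g u := by
        intro u hu
        rw [hgdef]
        simp only
        apply Real.one_le_exp
        have hVu := hVneg u hu
        apply div_nonneg (by linarith) hκ2.le
      have hc : ε₁ = ∫ _ in (-1:ℝ)..(-1+ε₁), (1:ℝ) := by
        rw [intervalIntegral.integral_const, smul_eq_mul]
        ring
      refine le_trans (le_of_eq hc) ?_
      exact intervalIntegral.integral_mono_on (by linarith) intervalIntegrable_const
        (hgcont.intervalIntegrable _ _) hle
    have h2 : 0 ≤ ∫ u in (-1+ε₁)..(1:ℝ), g u :=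
      intervalIntegral.integral_nonneg (by linarith) (fun u _ => (hgpos u).le)
    linarith
  -- lower bound 2 : near 1
  have hIin2 : ε₂ * Real.exp (-2 * V 1 / κ ^ 2) ≤ ∫ u in (-1:ℝ)..1, g u := by
    have hsplit : (∫ u in (-1:ℝ)..(1-ε₂), g u) + (∫ u in (1-ε₂)..(1:ℝ), g u)
        = ∫ u in (-1:ℝ)..1, g u :=
      intervalIntegral.integral_add_adjacent_intervals
        (hgcont.intervalIntegrable _ _) (hgcont.intervalIntegrable _ _)
    have h1 : ε₂ * Real.exp (-2 * V 1 / κ ^ 2) ≤ ∫ u in (1-ε₂)..(1:ℝ), g u := by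
      have hle : ∀ u ∈ Set.Icc (1-ε₂) (1:ℝ), Real.exp (-2 * V 1 / κ ^ 2) ≤ g u := by
        intro u hu
        rw [hgdef]
        simp only
        apply Real.exp_le_exp.mpr
        have hVu := hVle1 u hu
        exact (div_le_div_iff_of_pos_right hκ2).mpr (by linarith)
      have hc : ε₂ * Real.exp (-2 * V 1 / κ ^ 2)
          = ∫ _ in (1-ε₂)..(1:ℝ), Real.exp (-2 * V 1 / κ ^ 2) := by
        rw [intervalIntegral.integral_const, smul_eq_mul]
        ring
      refine le_trans (le_of_eq hc) ?_
      exact intervalIntegral.integral_mono_on (by linarith) intervalIntegrable_const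
        (hgcont.intervalIntegrable _ _) hle
    have h2 : 0 ≤ ∫ u in (-1:ℝ)..(1-ε₂), g u :=
      intervalIntegral.integral_nonneg (by linarith) (fun u _ => (hgpos u).le)
    linarith
  -- put everything together
  set Iin : ℝ := ∫ u in Set.Ioc (-1:ℝ) 1, g u with hIin
  set L : ℝ := ∫ u in Set.Iic (-1:ℝ), g u with hL
  set R : ℝ := ∫ u in Set.Ioi (1:ℝ), g u with hR
  rw [hIinEq] at hIin1 hIin2
  have hIinpos : 0 < Iin := lt_of_lt_of_le hε₁pos hIin1
  have hE2pos : 0 < ε₂ * Real.exp (-2 * V 1 / κ ^ 2) := by positivity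
  have hLnonneg : 0 ≤ L := setIntegral_nonneg measurableSet_Iic (fun u _ => (hgpos u).le)
  have hRnonneg : 0 ≤ R := setIntegral_nonneg measurableSet_Ioi (fun u _ => (hgpos u).le)
  have hT : ∫ u, g u = L + (Iin + R) := by rw [hsplit1, hsplit2]
  have hTpos : 0 < L + (Iin + R) := by linarith
  rw [hP κ hκ]
  have hgoal : (∫ u in (-1:ℝ)..1, Real.exp (-2 * V u / κ ^ 2)) = Iin := by
    rw [← hIinEq]
  have hgoal2 : (∫ u : ℝ, Real.exp (-2 * V u / κ ^ 2)) = L + (Iin + R) := hT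
  rw [hgoal, hgoal2]
  have key : 1 - Iin / (L + (Iin + R)) = (L + R) / (L + (Iin + R)) := by
    field_simp
    ring
  rw [key]
  have step1 : (L + R) / (L + (Iin + R)) ≤ (L + R) / Iin :=
    div_le_div_of_nonneg_left (by linarith) hIinpos (by linarith)
  have step2 : (L + R) / Iin = L / Iin + R / Iin := add_div _ _ _
  have step3 : L / Iin ≤ L / ε₁ := div_le_div_of_nonneg_left hLnonneg hε₁pos hIin1
  have step4 : R / Iin ≤ R / (ε₂ * Real.exp (-2 * V 1 / κ ^ 2)) :=
    div_le_div_of_nonneg_left hRnonneg hE2pos hIin2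
  have val3 : L / ε₁ = 1 / (2 * aminus * ε₁) * κ ^ 2 := by
    rw [hLval, hb₁]
    field_simp
  have val4 : R / (ε₂ * Real.exp (-2 * V 1 / κ ^ 2)) = 1 / (2 * (-aplus) * ε₂) * κ ^ 2 := by
    have hstep : R / (ε₂ * Real.exp (-2 * V 1 / κ ^ 2)) = (1 / b₂) / ε₂ := by
      rw [hRval, mul_comm ε₂ (Real.exp (-2 * V 1 / κ ^ 2)),
        mul_div_mul_left _ _ (Real.exp_pos (-2 * V 1 / κ ^ 2)).ne']
    rw [hstep, hb₂, one_div_div, div_div, one_div_mul_eq_div]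
  have : (L + R) / (L + (Iin + R))
      ≤ 1 / (2 * aminus * ε₁) * κ ^ 2 + 1 / (2 * (-aplus) * ε₂) * κ ^ 2 := by
    rw [← val3, ← val4]
    calc (L + R) / (L + (Iin + R)) ≤ (L + R) / Iin := step1
    _ = L / Iin + R / Iin := step2
    _ ≤ L / ε₁ + R / (ε₂ * Real.exp (-2 * V 1 / κ ^ 2)) := add_le_add step3 step4
  linarith [this]
end

section
/- Define R : [−r, r] → ℝ by R(x) = (2/κ²)·exp(−2V(x)/κ²)·∫_{x}^{r} (H(v) − C(κ))·exp(2V(v)/κ²) dv. Then R(r) = 0, R(−r) = 0, and for every x ∈ (−r, r) with x ≠ 0 the function R is differentiable at x and satisfies −φ(x)·R(x) + (κ²/2)·R′(x) = C(κ) − H(x). -/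
open MeasureTheory Real Set Filter

/-- The function `R` solves the time-integrated Fokker–Planck boundary value
problem: it vanishes at `±r` and satisfies `-φ R + (κ²/2) R′ = C - H` away
from `0`. -/
theorem stmt6
    (aminus aplus : ℝ) (A : ℝ → ℝ)
    (hAcont : ContinuousOn A (Set.Icc (-1) 1))
    (hAm : A (-1) = aminus) (hAp : A 1 = aplus)
    (φ : ℝ → ℝ)
    (hφ : ∀ u : ℝ, φ u = if u ≤ -1 then aminus else if u < 1 then A u else aplus)
    (V : ℝ → ℝ)
    (hV : ∀ x : ℝ, V x = -∫ v in (-1:ℝ)..x, φ v)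
    (κ r : ℝ) (hκ : 0 < κ) (hr : 1 < r)
    (H : ℝ → ℝ) (hH : ∀ v : ℝ, H v = if 0 ≤ v then 1 else 0)
    (C : ℝ)
    (hC : C = (∫ w in (0:ℝ)..r, Real.exp (2 * V w / κ ^ 2)) /
      (∫ w in (-r)..r, Real.exp (2 * V w / κ ^ 2)))
    (R : ℝ → ℝ)
    (hR : ∀ x : ℝ, R x = 2 / κ ^ 2 * Real.exp (-2 * V x / κ ^ 2) *
      ∫ v in x..r, (H v - C) * Real.exp (2 * V v / κ ^ 2)) :
    R r = 0 ∧ R (-r) = 0 ∧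
    ∀ x ∈ Set.Ioo (-r) r, x ≠ 0 →
      DifferentiableAt ℝ R x ∧
      -φ x * R x + κ ^ 2 / 2 * deriv R x = C - H x := by
  have hκ2 : (κ:ℝ)^2 ≠ 0 := pow_ne_zero 2 hκ.ne'
  -- continuity of φ
  have h11 : (-1:ℝ) ≤ 1 := by norm_num
  have hφc : Continuous φ := by
    have hφeq : φ = Set.IccExtend h11 ((Set.Icc (-1:ℝ) 1).restrict A) := by
      funext u
      rw [hφ]
      rcases le_or_gt u (-1) with h1 | h1
      · rw [if_pos h1]
        rw [Set.IccExtend_of_le_left h11 _ h1]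
        exact hAm.symm
      · rw [if_neg (not_le.mpr h1)]
        rcases lt_or_ge u 1 with h2 | h2
        · rw [if_pos h2, Set.IccExtend_of_mem h11 _ ⟨h1.le, h2.le⟩]
          rfl
        · rw [if_neg (not_lt.mpr h2), Set.IccExtend_of_right_le h11 _ h2]
          exact hAp.symm
    rw [hφeq]
    exact (hAcont.restrict).Icc_extend'
  -- V is differentiable with derivative -φ
  have hVd : ∀ x : ℝ, HasDerivAt V (-φ x) x := by
    intro x
    have hF : HasDerivAt (fun u => ∫ v in (-1:ℝ)..u, φ v) (φ x) x :=
      intervalIntegral.integral_hasDerivAt_right (hφc.intervalIntegrable _ _)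
        ⟨univ, univ_mem, hφc.aestronglyMeasurable.restrict⟩ hφc.continuousAt
    have : HasDerivAt (fun u => -∫ v in (-1:ℝ)..u, φ v) (-φ x) x := hF.neg
    exact this.congr_of_eventuallyEq (Filter.Eventually.of_forall hV)
  have hVc : Continuous V := by
    rw [continuous_iff_continuousAt]
    exact fun x => (hVd x).differentiableAt.continuousAt
  -- the weight g and the integrand f
  set g : ℝ → ℝ := fun v => Real.exp (2 * V v / κ ^ 2) with hg
  have hgc : Continuous g := Real.continuous_exp.comp ((continuous_const.mul hVc).div_const _)
  set f : ℝ → ℝ := fun v => (H v - C) * g v with hf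
  have hHmono : Monotone H := by
    intro a b hab
    rw [hH, hH]
    by_cases ha : 0 ≤ a
    · rw [if_pos ha, if_pos (ha.trans hab)]
    · rw [if_neg ha]; positivity
  have hfint : ∀ a b : ℝ, IntervalIntegrable f volume a b := by
    intro a b
    exact ((hHmono.intervalIntegrable).sub (intervalIntegrable_const)).mul_continuousOn
      hgc.continuousOn
  have hfmeas : Measurable f := by
    have hHmeas : Measurable H := by
      have : H = (Set.Ici (0:ℝ)).indicator (fun _ => (1:ℝ)) := by
        funext v
        rw [hH]
        by_cases h : 0 ≤ v <;> simp [h]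
      rw [this]
      exact (measurable_const).indicator measurableSet_Ici
    exact (hHmeas.sub measurable_const).mul hgc.measurable
  -- key: total integral vanishes
  have hden : 0 < ∫ w in (-r:ℝ)..r, g w :=
    intervalIntegral.intervalIntegral_pos_of_pos (hgc.intervalIntegrable _ _)
      (fun x => Real.exp_pos _) (by linarith)
  have hsplit : (∫ v in (-r:ℝ)..r, f v) = 0 := by
    have hadd : (∫ v in (-r:ℝ)..r, f v) =
        (∫ v in (-r:ℝ)..0, f v) + ∫ v in (0:ℝ)..r, f v :=
      (intervalIntegral.integral_add_adjacent_intervals (hfint _ _) (hfint _ _)).symm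
    have hpos : (∫ v in (0:ℝ)..r, f v) = (1 - C) * ∫ v in (0:ℝ)..r, g v := by
      rw [← intervalIntegral.integral_const_mul]
      apply intervalIntegral.integral_congr
      intro v hv
      rw [Set.uIcc_of_le (by linarith)] at hv
      have : H v = 1 := by rw [hH, if_pos hv.1]
      simp [hf, this]
    have hneg : (∫ v in (-r:ℝ)..0, f v) = -C * ∫ v in (-r:ℝ)..0, g v := by
      rw [← intervalIntegral.integral_const_mul]
      apply intervalIntegral.integral_congr_ae
      have h0 : ∀ᵐ v : ℝ, v ≠ 0 := by
        rw [MeasureTheory.ae_iff]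
        simpa using Real.volume_singleton (a := 0)
      filter_upwards [h0] with v hv hmem
      rw [Set.uIoc_of_le (by linarith : (-r:ℝ) ≤ 0)] at hmem
      have : H v = 0 := by rw [hH, if_neg (by rcases hmem with ⟨_, h2⟩; intro h; exact hv (le_antisymm h2 h))]
      simp [hf, this]
    have hgadd : (∫ v in (-r:ℝ)..0, g v) + ∫ v in (0:ℝ)..r, g v = ∫ v in (-r:ℝ)..r, g v :=
      intervalIntegral.integral_add_adjacent_intervals (hgc.intervalIntegrable _ _)
        (hgc.intervalIntegrable _ _)
    have hCval : C * (∫ v in (-r:ℝ)..r, g v) = ∫ v in (0:ℝ)..r, g v := by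
      rw [hC]
      field_simp
    rw [hadd, hpos, hneg]
    linear_combination (-C) * hgadd - hCval
  refine ⟨by rw [hR]; simp, by rw [hR, hsplit]; ring, ?_⟩
  intro x hx hx0
  -- derivative of the exponential factor
  have hed : HasDerivAt (fun u => Real.exp (-2 * V u / κ ^ 2))
      (Real.exp (-2 * V x / κ ^ 2) * (2 * φ x / κ ^ 2)) x := by
    have h1 : HasDerivAt (fun u => -2 * V u / κ ^ 2) (2 * φ x / κ ^ 2) x := by
      have := ((hVd x).const_mul (-2 : ℝ)).div_const (κ ^ 2)
      refine this.congr_deriv ?_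
      ring
    exact (Real.hasDerivAt_exp _).comp x h1
  -- derivative of the integral factor
  have hfcx : ContinuousAt f x := by
    rcases lt_or_gt_of_ne hx0 with hneg | hpos
    · have hev : (fun v => -C * g v) =ᶠ[nhds x] f := by
        filter_upwards [Iio_mem_nhds hneg] with v hv
        have : H v = 0 := by rw [hH, if_neg (not_le.mpr hv)]
        simp [hf, this]
      exact ((continuous_const.mul hgc).continuousAt).congr hev
    · have hev : (fun v => (1 - C) * g v) =ᶠ[nhds x] f := by
        filter_upwards [Ioi_mem_nhds hpos] with v hv
        have : H v = 1 := by rw [hH, if_pos (le_of_lt hv)]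
        simp [hf, this]
      exact ((continuous_const.mul hgc).continuousAt).congr hev
  have hGd : HasDerivAt (fun u => ∫ v in u..r, f v) (-f x) x :=
    intervalIntegral.integral_hasDerivAt_left (hfint x r)
      ⟨univ, univ_mem, hfmeas.aestronglyMeasurable.restrict⟩ hfcx
  have hRd : HasDerivAt R
      (2 / κ ^ 2 * (Real.exp (-2 * V x / κ ^ 2) * (2 * φ x / κ ^ 2) *
        (∫ v in x..r, f v) + Real.exp (-2 * V x / κ ^ 2) * (-f x))) x := by
    have h1 := ((hed.mul hGd).const_mul (2 / κ ^ 2))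
    have h2 : ∀ y : ℝ, R y =
        2 / κ ^ 2 * (Real.exp (-2 * V y / κ ^ 2) * ∫ v in y..r, f v) := by
      intro y; rw [hR y]; ring
    exact h1.congr_of_eventuallyEq (Filter.Eventually.of_forall h2)
  refine ⟨hRd.differentiableAt, ?_⟩
  have hee : Real.exp (-2 * V x / κ ^ 2) * Real.exp (2 * V x / κ ^ 2) = 1 := by
    rw [← Real.exp_add]
    rw [show -2 * V x / κ ^ 2 + 2 * V x / κ ^ 2 = 0 by ring, Real.exp_zero]
  have hfx : f x = (H x - C) * Real.exp (2 * V x / κ ^ 2) := rfl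
  have key : -φ x * R x + κ ^ 2 / 2 * deriv R x =
      -((H x - C) * (Real.exp (-2 * V x / κ ^ 2) * Real.exp (2 * V x / κ ^ 2))) := by
    rw [hRd.deriv, hR x, hfx]
    field_simp
    ring
  rw [key, hee]
  ring
end

section
/- Suppose a⁻ > 0 and a⁺ > 0, and let V_max = max_{w ∈ [0,1]} V(w). Then C(κ) ≤ (1 + κ²/(2a⁺))·exp(2V_max/κ²) · (2a⁻) / (κ²·(exp(2a⁻(r−1)/κ²) − 1)). In particular, for fixed r the constant C(κ) is exponentially small as κ → 0⁺. -/
open MeasureTheory Real Set Filter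

lemma integral_exp_affine (c d a b : ℝ) (hc : c ≠ 0) :
    ∫ w in a..b, Real.exp (c * w + d) = (Real.exp (c * b + d) - Real.exp (c * a + d)) / c := by
  have h : ∀ x ∈ Set.uIcc a b, HasDerivAt (fun w => Real.exp (c * w + d) / c)
      (Real.exp (c * x + d)) x := by
    intro x _
    have h1 : HasDerivAt (fun w : ℝ => c * w + d) c x := by
      simpa using ((hasDerivAt_id x).const_mul c).add_const d
    have h3 := h1.exp.div_const c
    rwa [mul_div_assoc, div_self hc, mul_one] at h3
  rw [intervalIntegral.integral_eq_sub_of_hasDerivAt h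
    ((Real.continuous_exp.comp (by continuity)).intervalIntegrable a b)]
  ring

/-- In a crossing region (`a⁻, a⁺ > 0`) the constant `C(κ)` is exponentially
small as `κ → 0⁺`: an explicit upper bound. -/
theorem stmt8
    (aminus aplus : ℝ) (A : ℝ → ℝ)
    (hAcont : ContinuousOn A (Set.Icc (-1) 1))
    (hAm : A (-1) = aminus) (hAp : A 1 = aplus)
    (φ : ℝ → ℝ)
    (hφ : ∀ u : ℝ, φ u = if u ≤ -1 then aminus else if u < 1 then A u else aplus)
    (V : ℝ → ℝ)
    (hV : ∀ x : ℝ, V x = -∫ v in (-1:ℝ)..x, φ v)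
    (ham : 0 < aminus) (hap : 0 < aplus)
    (κ r : ℝ) (hκ : 0 < κ) (hr : 1 < r)
    (C : ℝ)
    (hC : C = (∫ w in (0:ℝ)..r, Real.exp (2 * V w / κ ^ 2)) /
      (∫ w in (-r)..r, Real.exp (2 * V w / κ ^ 2)))
    (Vmax : ℝ) (hVmax : IsGreatest (V '' Set.Icc (0:ℝ) 1) Vmax) :
    C ≤ (1 + κ ^ 2 / (2 * aplus)) * Real.exp (2 * Vmax / κ ^ 2) * (2 * aminus) /
      (κ ^ 2 * (Real.exp (2 * aminus * (r - 1) / κ ^ 2) - 1)) := by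
  have hκ2 : (0:ℝ) < κ ^ 2 := by positivity
  -- φ is the clamped version of A
  have hφA : ∀ u : ℝ, φ u = A (max (-1) (min 1 u)) := by
    intro u; rw [hφ]
    rcases le_or_gt u (-1) with h | h
    · rw [if_pos h, min_eq_right (h.trans (by norm_num)), max_eq_left h, hAm]
    · rw [if_neg (not_le.2 h)]
      rcases lt_or_ge u 1 with h2 | h2
      · rw [if_pos h2, min_eq_right h2.le, max_eq_right h.le]
      · rw [if_neg (not_lt.2 h2), min_eq_left h2,
          max_eq_right (by norm_num : (-1:ℝ) ≤ 1), hAp]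
  have hφcont : Continuous φ := by
    have hclamp : Continuous fun u : ℝ => max (-1) (min 1 u) :=
      continuous_const.max (continuous_const.min continuous_id)
    have hmem : ∀ u : ℝ, max (-1) (min 1 u) ∈ Set.Icc (-1:ℝ) 1 := by
      intro u
      refine ⟨le_max_left _ _, max_le (by norm_num) (min_le_left _ _)⟩
    exact (hAcont.comp_continuous hclamp hmem).congr fun u => (hφA u).symm
  have hφint : ∀ a b : ℝ, IntervalIntegrable φ volume a b :=
    fun a b => hφcont.intervalIntegrable a b
  have hVcont : Continuous V := by
    have : Continuous fun x : ℝ => ∫ v in (-1:ℝ)..x, φ v :=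
      intervalIntegral.continuous_primitive hφint (-1)
    exact this.neg.congr fun x => (hV x).symm
  -- V on (-∞, -1]
  have hVneg : ∀ x : ℝ, x ≤ -1 → V x = -aminus * (x + 1) := by
    intro x hx
    rw [hV]
    have hcongr : ∫ v in (-1:ℝ)..x, φ v = ∫ v in (-1:ℝ)..x, aminus := by
      apply intervalIntegral.integral_congr
      intro u hu
      rw [Set.uIcc_comm, Set.uIcc_of_le hx] at hu
      rw [hφ, if_pos hu.2]
    rw [hcongr, intervalIntegral.integral_const, smul_eq_mul]
    ring
  -- V on [1, ∞)
  have hVpos : ∀ x : ℝ, 1 ≤ x → V x = V 1 - aplus * (x - 1) := by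
    intro x hx
    have hsplit : (∫ v in (-1:ℝ)..1, φ v) + ∫ v in (1:ℝ)..x, φ v
        = ∫ v in (-1:ℝ)..x, φ v :=
      intervalIntegral.integral_add_adjacent_intervals (hφint _ _) (hφint _ _)
    have h2 : ∫ v in (1:ℝ)..x, φ v = aplus * (x - 1) := by
      have hcongr : ∫ v in (1:ℝ)..x, φ v = ∫ v in (1:ℝ)..x, aplus := by
        apply intervalIntegral.integral_congr
        intro u hu
        rw [Set.uIcc_of_le hx] at hu
        rw [hφ, if_neg (by linarith [hu.1]), if_neg (not_lt.2 hu.1)]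
      rw [hcongr, intervalIntegral.integral_const, smul_eq_mul]
      ring
    have e1 := hV x
    rw [← hsplit, h2] at e1
    rw [e1, hV 1]
    ring
  have hVle : ∀ w ∈ Set.Icc (0:ℝ) 1, V w ≤ Vmax := fun w hw => hVmax.2 ⟨w, hw, rfl⟩
  have hV1le : V 1 ≤ Vmax := hVle 1 ⟨by norm_num, le_refl _⟩
  -- the integrand
  set f : ℝ → ℝ := fun w => Real.exp (2 * V w / κ ^ 2) with hf
  have hfcont : Continuous f := by
    apply Real.continuous_exp.comp
    exact (continuous_const.mul hVcont).div_const _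
  have hfint : ∀ a b : ℝ, IntervalIntegrable f volume a b :=
    fun a b => hfcont.intervalIntegrable a b
  -- Numerator bound
  have hNsplit : (∫ w in (0:ℝ)..1, f w) + ∫ w in (1:ℝ)..r, f w
      = ∫ w in (0:ℝ)..r, f w :=
    intervalIntegral.integral_add_adjacent_intervals (hfint _ _) (hfint _ _)
  have hI01 : ∫ w in (0:ℝ)..1, f w ≤ Real.exp (2 * Vmax / κ ^ 2) := by
    have hmono : ∫ w in (0:ℝ)..1, f w
        ≤ ∫ _w in (0:ℝ)..1, Real.exp (2 * Vmax / κ ^ 2) := by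
      apply intervalIntegral.integral_mono_on (by norm_num) (hfint _ _)
        intervalIntegrable_const
      intro x hx
      apply Real.exp_le_exp.2
      apply div_le_div_of_nonneg_right _ hκ2.le
      linarith [hVle x hx]
    simpa using hmono
  have hapne : (2 * aplus) ≠ 0 := by positivity
  have hcne : (-(2 * aplus) / κ ^ 2) ≠ 0 := by
    apply div_ne_zero _ (ne_of_gt hκ2)
    simp [hapne]
  have hI1r : ∫ w in (1:ℝ)..r, f w ≤ Real.exp (2 * Vmax / κ ^ 2) * (κ ^ 2 / (2 * aplus)) := by
    set c : ℝ := -(2 * aplus) / κ ^ 2 with hcdef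
    set d : ℝ := (2 * V 1 + 2 * aplus) / κ ^ 2 with hddef
    have hc : c ≠ 0 := hcne
    have hcneg : c < 0 := by
      apply div_neg_of_neg_of_pos _ hκ2
      linarith
    have hcongr : ∫ w in (1:ℝ)..r, f w = ∫ w in (1:ℝ)..r, Real.exp (c * w + d) := by
      apply intervalIntegral.integral_congr
      intro u hu
      rw [Set.uIcc_of_le hr.le] at hu
      rw [hf]
      simp only
      congr 1
      rw [hVpos u hu.1, hcdef, hddef]
      field_simp
      ring
    rw [hcongr, integral_exp_affine c d 1 r hc]
    have h1 : c * 1 + d = 2 * V 1 / κ ^ 2 := by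
      rw [hcdef, hddef]; field_simp; ring
    have hler : Real.exp (c * r + d) ≤ Real.exp (c * 1 + d) := by
      apply Real.exp_le_exp.2
      nlinarith [hr.le]
    have hpos : 0 < Real.exp (c * r + d) := Real.exp_pos _
    have hexple : Real.exp (c * 1 + d) ≤ Real.exp (2 * Vmax / κ ^ 2) := by
      rw [h1]
      apply Real.exp_le_exp.2
      apply div_le_div_of_nonneg_right _ hκ2.le
      linarith
    calc (Real.exp (c * r + d) - Real.exp (c * 1 + d)) / c
        = (Real.exp (c * 1 + d) - Real.exp (c * r + d)) / (-c) := by ring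
      _ ≤ Real.exp (c * 1 + d) / (-c) := by
          apply div_le_div_of_nonneg_right (by linarith) (by linarith : (0:ℝ) ≤ -c)
      _ ≤ Real.exp (2 * Vmax / κ ^ 2) / (-c) := by
          apply div_le_div_of_nonneg_right hexple (by linarith : (0:ℝ) ≤ -c)
      _ = Real.exp (2 * Vmax / κ ^ 2) * (κ ^ 2 / (2 * aplus)) := by
          rw [hcdef]; field_simp
  have hN : ∫ w in (0:ℝ)..r, f w
      ≤ (1 + κ ^ 2 / (2 * aplus)) * Real.exp (2 * Vmax / κ ^ 2) := by
    rw [← hNsplit]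
    nlinarith [hI01, hI1r]
  -- Denominator bound
  set E : ℝ := Real.exp (2 * aminus * (r - 1) / κ ^ 2) with hEdef
  have hE1 : 1 < E := by
    rw [hEdef]
    apply Real.one_lt_exp_iff.2
    apply div_pos _ hκ2
    nlinarith
  have hDsplit : (∫ w in (-r)..(-1:ℝ), f w) + ∫ w in (-1:ℝ)..r, f w
      = ∫ w in (-r)..r, f w :=
    intervalIntegral.integral_add_adjacent_intervals (hfint _ _) (hfint _ _)
  have hI2 : 0 ≤ ∫ w in (-1:ℝ)..r, f w := by
    apply intervalIntegral.integral_nonneg (by linarith)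
    intro u _
    exact (Real.exp_pos _).le
  have hI1 : ∫ w in (-r)..(-1:ℝ), f w = κ ^ 2 * (E - 1) / (2 * aminus) := by
    set c : ℝ := -(2 * aminus) / κ ^ 2 with hcdef
    have hc : c ≠ 0 := by
      apply div_ne_zero _ (ne_of_gt hκ2)
      intro h
      nlinarith
    have hcongr : ∫ w in (-r)..(-1:ℝ), f w = ∫ w in (-r)..(-1:ℝ), Real.exp (c * w + c) := by
      apply intervalIntegral.integral_congr
      intro u hu
      rw [Set.uIcc_of_le (by linarith)] at hu
      rw [hf]
      simp only
      congr 1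
      rw [hVneg u hu.2, hcdef]
      field_simp
      ring
    rw [hcongr, integral_exp_affine c c (-r) (-1) hc]
    have h0 : c * (-1) + c = 0 := by ring
    have h1 : c * (-r) + c = 2 * aminus * (r - 1) / κ ^ 2 := by
      rw [hcdef]; field_simp; ring
    rw [h0, h1, Real.exp_zero, ← hEdef, hcdef]
    field_simp
    ring
  have hDb : (0:ℝ) < κ ^ 2 * (E - 1) / (2 * aminus) := by
    apply div_pos _ (by positivity)
    apply mul_pos hκ2
    linarith
  have hD : κ ^ 2 * (E - 1) / (2 * aminus) ≤ ∫ w in (-r)..r, f w := by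
    rw [← hDsplit, ← hI1]
    linarith
  -- conclude
  rw [hC]
  have hNbpos : 0 ≤ (1 + κ ^ 2 / (2 * aplus)) * Real.exp (2 * Vmax / κ ^ 2) := by positivity
  calc (∫ w in (0:ℝ)..r, f w) / (∫ w in (-r)..r, f w)
      ≤ ((1 + κ ^ 2 / (2 * aplus)) * Real.exp (2 * Vmax / κ ^ 2))
        / (κ ^ 2 * (E - 1) / (2 * aminus)) := div_le_div₀ hNbpos hN hDb hD
    _ = (1 + κ ^ 2 / (2 * aplus)) * Real.exp (2 * Vmax / κ ^ 2) * (2 * aminus) /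
        (κ ^ 2 * (E - 1)) := by
        rw [div_div_eq_mul_div]
end

section
/- Suppose a⁻ > 0 and a⁺ > 0. Then there exists a constant M > 0, depending only on a⁻, a⁺ and sup_{u ∈ [−1,1]} |V(u)|, such that for all κ ≥ 1 and all r ≥ 2, |T̃₀(κ) − (r−1)/a⁺| ≤ M·κ². (Thus when the noise is large relative to the smoothing, the mean escape time in a crossing region is r/a⁺ to leading order, independently of the smoothing function.) -/
open MeasureTheory Real Set Filter


private lemma int_exp_aff (β t a b : ℝ) (hβ : β ≠ 0) :
    ∫ x in a..b, Real.exp (β * x + t)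
      = (Real.exp (β * b + t) - Real.exp (β * a + t)) / β := by
  have h : ∀ x ∈ Set.uIcc a b,
      HasDerivAt (fun y => Real.exp (β * y + t) / β) (Real.exp (β * x + t)) x := by
    intro x _
    have h1 : HasDerivAt (fun y : ℝ => β * y + t) β x := by
      simpa using ((hasDerivAt_id x).const_mul β).add_const t
    have h2 := (Real.hasDerivAt_exp (β * x + t)).comp x h1
    have h3 := h2.div_const β
    simpa [mul_div_assoc, mul_div_cancel_right₀ _ hβ] using h3
  rw [intervalIntegral.integral_eq_sub_of_hasDerivAt h
    ((Real.continuous_exp.comp ((continuous_const.mul continuous_id).add continuous_const)).intervalIntegrable a b)]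
  ring


set_option maxHeartbeats 2000000 in
/-- Large-noise mean escape time from a crossing region: `T̃₀(κ) = (r-1)/a⁺ + O(κ²)`
uniformly in `r ≥ 2`, for `κ ≥ 1`. -/
theorem stmt10
    (aminus aplus : ℝ) (A : ℝ → ℝ)
    (hAcont : ContinuousOn A (Set.Icc (-1) 1))
    (hAm : A (-1) = aminus) (hAp : A 1 = aplus)
    (φ : ℝ → ℝ)
    (hφ : ∀ u : ℝ, φ u = if u ≤ -1 then aminus else if u < 1 then A u else aplus)
    (V : ℝ → ℝ)
    (hV : ∀ x : ℝ, V x = -∫ v in (-1:ℝ)..x, φ v)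
    (ham : 0 < aminus) (hap : 0 < aplus) :
    ∃ M > (0:ℝ), ∀ κ r : ℝ, 1 ≤ κ → 2 ≤ r →
      |2 / κ ^ 2 * (∫ v in (0:ℝ)..r, Real.exp (2 * V v / κ ^ 2) *
          ∫ u in (-r)..v, Real.exp (-2 * V u / κ ^ 2)) - (r - 1) / aplus|
        ≤ M * κ ^ 2 := by
  -- bound on A
  obtain ⟨C, hC⟩ := isCompact_Icc.exists_bound_of_continuousOn hAcont
  set K := max C 0 with hK
  have hK0 : 0 ≤ K := le_max_right _ _
  have hφK : ∀ u, |φ u| ≤ K := by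
    intro u
    rw [hφ u]
    split_ifs with h1 h2
    · rw [← hAm]; exact le_trans (hC _ ⟨le_refl _, by norm_num⟩) (le_max_left _ _)
    · exact le_trans (hC _ ⟨le_of_not_ge h1, le_of_lt h2⟩) (le_max_left _ _)
    · rw [← hAp]; exact le_trans (hC _ ⟨by norm_num, le_refl _⟩) (le_max_left _ _)
  -- φ continuous
  have hφeq : φ = fun u => A (max (-1) (min 1 u)) := by
    funext u
    rw [hφ u]
    split_ifs with h1 h2
    · rw [min_eq_right (le_trans h1 (by norm_num)), max_eq_left h1, hAm]
    · rw [min_eq_right (le_of_lt h2), max_eq_right (le_of_not_ge h1)]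
    · rw [min_eq_left (le_of_not_gt h2), max_eq_right (by norm_num), hAp]
  have hφcont : Continuous φ := by
    rw [hφeq]
    exact hAcont.comp_continuous
      (continuous_const.max (continuous_const.min continuous_id))
      (fun x => ⟨le_max_left _ _, max_le (by norm_num) (min_le_left _ _)⟩)
  have hVcont : Continuous V := by
    have := (intervalIntegral.continuous_primitive
      (fun a b => hφcont.intervalIntegrable (μ := volume) a b) (-1)).neg
    have hVf : V = fun x => -∫ v in (-1:ℝ)..x, φ v := funext hV
    rw [hVf]; exact this
  -- V on the right
  have hVup : ∀ v : ℝ, 1 ≤ v → V v = V 1 - aplus * (v - 1) := by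
    intro v hv
    have hsplit : (∫ u in (-1:ℝ)..1, φ u) + (∫ u in (1:ℝ)..v, φ u)
        = ∫ u in (-1:ℝ)..v, φ u :=
      intervalIntegral.integral_add_adjacent_intervals
        (hφcont.intervalIntegrable _ _) (hφcont.intervalIntegrable _ _)
    have hconst : (∫ u in (1:ℝ)..v, φ u) = aplus * (v - 1) := by
      rw [intervalIntegral.integral_congr (g := fun _ => aplus)
        (fun x hx => by
          rw [uIcc_of_le hv] at hx
          rw [hφ x, if_neg (by linarith [hx.1]), if_neg (not_lt.2 hx.1)]),
        intervalIntegral.integral_const, smul_eq_mul, mul_comm]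
    rw [hV v, hV 1, ← hsplit, hconst]; ring
  -- V on the left
  have hVdn : ∀ u : ℝ, u ≤ -1 → V u = -aminus * (u + 1) := by
    intro u hu
    have hconst : (∫ x in (-1:ℝ)..u, φ x) = aminus * (u + 1) := by
      rw [intervalIntegral.integral_congr (g := fun _ => aminus)
        (fun x hx => by
          rw [uIcc_of_ge hu] at hx
          rw [hφ x, if_pos hx.2]),
        intervalIntegral.integral_const, smul_eq_mul, mul_comm]
      ring
    rw [hV u, hconst]; ring
  -- bound on V on [-1,1]
  have hVb : ∀ x ∈ Icc (-1:ℝ) 1, |V x| ≤ 2 * K := by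
    intro x hx
    rw [hV x, abs_neg]
    have := intervalIntegral.norm_integral_le_of_norm_le_const
      (a := -1) (b := x) (C := K) (f := φ) (fun u _ => hφK u)
    rw [Real.norm_eq_abs] at this
    refine this.trans ?_
    have : |x - (-1)| ≤ 2 := by rw [abs_le]; constructor <;> linarith [hx.1, hx.2]
    nlinarith
  set E : ℝ := Real.exp (4 * K) with hE
  have hE1 : 1 ≤ E := Real.one_le_exp (by positivity)
  have hE0 : 0 < E := lt_of_lt_of_le one_pos hE1
  refine ⟨E/aminus + 4*E^2 + E/(aminus*aplus) + 2*E^2/aplus + 1/aplus^2 + 1,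
    by positivity, ?_⟩
  intro κ r hκ hr
  have hκ2 : (1:ℝ) ≤ κ ^ 2 := by nlinarith
  have hκ2pos : (0:ℝ) < κ ^ 2 := by linarith
  set c : ℝ := 2 / κ ^ 2 with hc
  have hc0 : 0 < c := by positivity
  have hc2 : c ≤ 2 := by
    rw [hc, div_le_iff₀ hκ2pos]; nlinarith
  set cam : ℝ := c * aminus with hcam
  set capl : ℝ := c * aplus with hcapl
  have hcam0 : 0 < cam := by positivity
  have hcapl0 : 0 < capl := by positivity
  set g : ℝ → ℝ := fun u => Real.exp (-2 * V u / κ ^ 2) with hgdef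
  set f : ℝ → ℝ := fun v => Real.exp (2 * V v / κ ^ 2) with hfdef
  show |c * (∫ v in (0:ℝ)..r, f v * ∫ u in (-r)..v, g u) - (r - 1) / aplus|
        ≤ _ * κ ^ 2
  have hgc : Continuous g :=
    Real.continuous_exp.comp ((continuous_const.mul hVcont).div_const _)
  have hfc : Continuous f :=
    Real.continuous_exp.comp ((continuous_const.mul hVcont).div_const _)
  have hgpos : ∀ u, 0 < g u := fun u => Real.exp_pos _
  -- pointwise descriptions of g and f
  have hgdn : ∀ u : ℝ, u ≤ -1 → g u = Real.exp (cam * u + cam) := by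
    intro u hu
    show Real.exp _ = _
    congr 1
    rw [hVdn u hu, hcam, hc]
    field_simp
  have hgup : ∀ u : ℝ, 1 ≤ u →
      g u = Real.exp (capl * u + (-2 * V 1 / κ ^ 2 - capl)) := by
    intro u hu
    show Real.exp _ = _
    congr 1
    rw [hVup u hu, hcapl, hc]
    field_simp
    ring
  have hfup : ∀ v : ℝ, 1 ≤ v →
      f v = Real.exp (-capl * v + (2 * V 1 / κ ^ 2 + capl)) := by
    intro v hv
    show Real.exp _ = _
    congr 1
    rw [hVup v hv, hcapl, hc]
    field_simp
    ring
  have hgmid : ∀ u ∈ Icc (-1:ℝ) 1, g u ≤ E := by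
    intro u hu
    apply Real.exp_le_exp.2
    have h1 := hVb u hu
    rw [abs_le] at h1
    rw [div_le_iff₀ hκ2pos]
    nlinarith [h1.1, h1.2]
  have hfmid : ∀ v ∈ Icc (-1:ℝ) 1, f v ≤ E := by
    intro v hv
    apply Real.exp_le_exp.2
    have h1 := hVb v hv
    rw [abs_le] at h1
    rw [div_le_iff₀ hκ2pos]
    nlinarith [h1.1, h1.2]

  -- tail integral on the left
  have hrm : -r ≤ -1 := by linarith
  have hr1 : (1:ℝ) ≤ r := by linarith
  have hJ1 : (∫ u in (-r)..(-1:ℝ), g u) ≤ 1 / cam := by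
    rw [intervalIntegral.integral_congr (g := fun u => Real.exp (cam * u + cam))
      (fun x hx => by
        rw [uIcc_of_le hrm] at hx
        exact hgdn x hx.2),
      int_exp_aff _ _ _ _ (ne_of_gt hcam0),
      show cam * (-1) + cam = 0 by ring, Real.exp_zero,
      div_le_div_iff_of_pos_right hcam0]
    linarith [Real.exp_pos (cam * (-r) + cam)]
  have hJ2 : ∀ v ∈ Icc (-1:ℝ) 1, (∫ u in (-1:ℝ)..v, g u) ≤ 2 * E := by
    intro v hv
    calc (∫ u in (-1:ℝ)..v, g u) ≤ ∫ _ in (-1:ℝ)..v, E :=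
        intervalIntegral.integral_mono_on hv.1 (hgc.intervalIntegrable _ _)
          intervalIntegrable_const
          (fun x hx => hgmid x ⟨hx.1, le_trans hx.2 hv.2⟩)
      _ = (v + 1) * E := by rw [intervalIntegral.integral_const, smul_eq_mul]; ring
      _ ≤ 2 * E := by nlinarith [hv.2]
  have hG0 : ∀ v : ℝ, -r ≤ v → 0 ≤ ∫ u in (-r)..v, g u := fun v hv =>
    intervalIntegral.integral_nonneg hv (fun u _ => (hgpos u).le)
  have hGb : ∀ v ∈ Icc (-1:ℝ) 1, (∫ u in (-r)..v, g u) ≤ 1 / cam + 2 * E := by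
    intro v hv
    rw [← intervalIntegral.integral_add_adjacent_intervals (b := (-1:ℝ))
      (hgc.intervalIntegrable _ _) (hgc.intervalIntegrable _ _)]
    exact add_le_add hJ1 (hJ2 v hv)
  -- the main identity on [1, r]
  have hMain : ∀ v ∈ Icc (1:ℝ) r, f v * (∫ u in (1:ℝ)..v, g u)
      = (1 - Real.exp (capl * (1 - v))) / capl := by
    intro v hv
    have hcongr : (∫ u in (1:ℝ)..v, g u)
        = (Real.exp (capl * v + (-2 * V 1 / κ ^ 2 - capl))
           - Real.exp (capl * 1 + (-2 * V 1 / κ ^ 2 - capl))) / capl := by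
      rw [intervalIntegral.integral_congr
        (g := fun u => Real.exp (capl * u + (-2 * V 1 / κ ^ 2 - capl)))
        (fun x hx => by
          rw [uIcc_of_le hv.1] at hx
          exact hgup x hx.1),
        int_exp_aff _ _ _ _ (ne_of_gt hcapl0)]
    rw [hfup v hv.1, hcongr, ← mul_div_assoc, mul_sub, ← Real.exp_add, ← Real.exp_add,
      show -capl * v + (2 * V 1 / κ ^ 2 + capl) + (capl * v + (-2 * V 1 / κ ^ 2 - capl)) = 0 by ring,
      show -capl * v + (2 * V 1 / κ ^ 2 + capl) + (capl * 1 + (-2 * V 1 / κ ^ 2 - capl)) = capl * (1 - v) by ring,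
      Real.exp_zero]
  -- bounds for the main term
  have hmcont : Continuous fun v : ℝ => (1 - Real.exp (capl * (1 - v))) / capl :=
    (continuous_const.sub (Real.continuous_exp.comp
      (continuous_const.mul (continuous_const.sub continuous_id)))).div_const _
  have hMhi : c * (∫ v in (1:ℝ)..r, (1 - Real.exp (capl * (1 - v))) / capl)
      ≤ (r - 1) / aplus := by
    have hb : (∫ v in (1:ℝ)..r, (1 - Real.exp (capl * (1 - v))) / capl)
        ≤ (r - 1) * (1 / capl) := by
      calc (∫ v in (1:ℝ)..r, (1 - Real.exp (capl * (1 - v))) / capl)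
          ≤ ∫ _ in (1:ℝ)..r, 1 / capl :=
          intervalIntegral.integral_mono_on hr1
            (hmcont.intervalIntegrable _ _)
            intervalIntegrable_const
            (fun x _ => by
              rw [div_le_div_iff_of_pos_right hcapl0]
              linarith [Real.exp_pos (capl * (1 - x))])
        _ = (r - 1) * (1 / capl) := by
          rw [intervalIntegral.integral_const, smul_eq_mul]
    calc c * (∫ v in (1:ℝ)..r, (1 - Real.exp (capl * (1 - v))) / capl)
        ≤ c * ((r - 1) * (1 / capl)) := mul_le_mul_of_nonneg_left hb hc0.le
      _ = (r - 1) / aplus := by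
          rw [hcapl]; field_simp
  have hexpint : (∫ v in (1:ℝ)..r, Real.exp (-capl * v + capl)) ≤ 1 / capl := by
    rw [int_exp_aff _ _ _ _ (neg_ne_zero.2 (ne_of_gt hcapl0)),
      show -capl * 1 + capl = 0 by ring, Real.exp_zero, div_neg, ← neg_div, neg_sub,
      div_le_div_iff_of_pos_right hcapl0]
    linarith [Real.exp_pos (-capl * r + capl)]
  have hexpint0 : 0 ≤ (∫ v in (1:ℝ)..r, Real.exp (-capl * v + capl)) :=
    intervalIntegral.integral_nonneg hr1 (fun x _ => (Real.exp_pos _).le)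
  have hMlo : (r - 1) / aplus - κ ^ 2 / aplus ^ 2
      ≤ c * (∫ v in (1:ℝ)..r, (1 - Real.exp (capl * (1 - v))) / capl) := by
    have hsplit : (∫ v in (1:ℝ)..r, (1 - Real.exp (capl * (1 - v))) / capl)
        = (r - 1) * (1 / capl)
          - (∫ v in (1:ℝ)..r, Real.exp (-capl * v + capl)) / capl := by
      have hsub := intervalIntegral.integral_sub (a := (1:ℝ)) (b := r)
        (μ := volume) (f := fun _ => 1 / capl)
        (g := fun x => Real.exp (-capl * x + capl) / capl)
        intervalIntegrable_const
        (((Real.continuous_exp.comp ((continuous_const.mul continuous_id).add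
          continuous_const)).div_const _).intervalIntegrable _ _)
      rw [intervalIntegral.integral_congr
        (g := fun v => 1 / capl - Real.exp (-capl * v + capl) / capl)
        (fun x _ => by rw [show capl * (1 - x) = -capl * x + capl by ring]; ring),
        hsub, intervalIntegral.integral_const, smul_eq_mul, intervalIntegral.integral_div]
    rw [hsplit]
    have key : c * ((r - 1) * (1 / capl)) = (r - 1) / aplus := by
      rw [hcapl]; field_simp
    have key2 : c * ((1 / capl) / capl) ≤ κ ^ 2 / aplus ^ 2 := by
      have e1 : c * ((1 / capl) / capl) = κ ^ 2 / (2 * aplus ^ 2) := by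
        rw [hcapl, hc]; field_simp
      have e2 : κ ^ 2 / (2 * aplus ^ 2) = (κ ^ 2 / aplus ^ 2) / 2 := by ring
      have e3 : (0:ℝ) ≤ κ ^ 2 / aplus ^ 2 := by positivity
      rw [e1, e2]; linarith
    have h3 : c * ((∫ v in (1:ℝ)..r, Real.exp (-capl * v + capl)) / capl)
        ≤ κ ^ 2 / aplus ^ 2 := by
      refine le_trans ?_ key2
      gcongr
    nlinarith [h3, key]

  -- continuity of primitives
  have hGcont : Continuous fun v => ∫ u in (-r)..v, g u :=
    intervalIntegral.continuous_primitive
      (fun a b => hgc.intervalIntegrable (μ := volume) a b) (-r)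
  -- split the outer integral at 1
  have hsplit0r : (∫ v in (0:ℝ)..r, f v * ∫ u in (-r)..v, g u)
      = (∫ v in (0:ℝ)..1, f v * ∫ u in (-r)..v, g u)
        + ∫ v in (1:ℝ)..r, f v * ∫ u in (-r)..v, g u :=
    (intervalIntegral.integral_add_adjacent_intervals
      ((hfc.mul hGcont).intervalIntegrable _ _)
      ((hfc.mul hGcont).intervalIntegrable _ _)).symm
  -- bounds for the [0,1] part
  have hX0 : 0 ≤ ∫ v in (0:ℝ)..1, f v * ∫ u in (-r)..v, g u :=
    intervalIntegral.integral_nonneg (by norm_num)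
      (fun x hx => mul_nonneg (Real.exp_pos _).le (hG0 x (by linarith [hx.1])))
  have hXb : (∫ v in (0:ℝ)..1, f v * ∫ u in (-r)..v, g u) ≤ E * (1 / cam + 2 * E) := by
    calc (∫ v in (0:ℝ)..1, f v * ∫ u in (-r)..v, g u)
        ≤ ∫ _ in (0:ℝ)..1, E * (1 / cam + 2 * E) :=
        intervalIntegral.integral_mono_on (by norm_num)
          ((hfc.mul hGcont).intervalIntegrable _ _)
          intervalIntegrable_const
          (fun x hx => by
            have hx1 : x ∈ Icc (-1:ℝ) 1 := ⟨by linarith [hx.1], hx.2⟩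
            exact mul_le_mul (hfmid x hx1) (hGb x hx1)
              (hG0 x (by linarith [hx.1])) hE0.le)
      _ = E * (1 / cam + 2 * E) := by
          rw [intervalIntegral.integral_const, smul_eq_mul]; ring
  -- bounds for ∫ f on [1,r]
  have hI0 : 0 ≤ ∫ v in (1:ℝ)..r, f v :=
    intervalIntegral.integral_nonneg hr1 (fun x _ => (Real.exp_pos _).le)
  have hIb : (∫ v in (1:ℝ)..r, f v) ≤ E / capl := by
    rw [intervalIntegral.integral_congr
      (g := fun v => Real.exp (-capl * v + (2 * V 1 / κ ^ 2 + capl)))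
      (fun x hx => by
        rw [uIcc_of_le hr1] at hx
        exact hfup x hx.1),
      int_exp_aff _ _ _ _ (neg_ne_zero.2 (ne_of_gt hcapl0)),
      div_neg, ← neg_div, neg_sub, div_le_div_iff_of_pos_right hcapl0]
    have h1 : Real.exp (-capl * 1 + (2 * V 1 / κ ^ 2 + capl)) ≤ E := by
      rw [show -capl * 1 + (2 * V 1 / κ ^ 2 + capl) = 2 * V 1 / κ ^ 2 by ring]
      exact hfmid 1 ⟨by norm_num, le_refl 1⟩
    linarith [Real.exp_pos (-capl * r + (2 * V 1 / κ ^ 2 + capl))]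
  have hJb : (∫ u in (-r)..(1:ℝ), g u) ≤ 1 / cam + 2 * E :=
    hGb 1 ⟨by norm_num, le_refl 1⟩
  have hJ0 : 0 ≤ ∫ u in (-r)..(1:ℝ), g u := hG0 1 (by linarith)
  -- decompose the [1,r] part
  have hPcont : Continuous fun v => ∫ u in (1:ℝ)..v, g u :=
    intervalIntegral.continuous_primitive
      (fun a b => hgc.intervalIntegrable (μ := volume) a b) 1
  have hmid : (∫ v in (1:ℝ)..r, f v * ∫ u in (-r)..v, g u)
      = (∫ v in (1:ℝ)..r, f v) * (∫ u in (-r)..(1:ℝ), g u)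
        + ∫ v in (1:ℝ)..r, (1 - Real.exp (capl * (1 - v))) / capl := by
    have h1 : EqOn (fun v => f v * ∫ u in (-r)..v, g u)
        (fun v => f v * (∫ u in (-r)..(1:ℝ), g u)
          + (1 - Real.exp (capl * (1 - v))) / capl) (uIcc 1 r) := by
      intro x hx
      rw [uIcc_of_le hr1] at hx
      show f x * ∫ u in (-r)..x, g u = _
      calc f x * ∫ u in (-r)..x, g u
          = f x * ((∫ u in (-r)..(1:ℝ), g u) + ∫ u in (1:ℝ)..x, g u) := by
            rw [intervalIntegral.integral_add_adjacent_intervals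
              (hgc.intervalIntegrable _ _) (hgc.intervalIntegrable _ _)]
        _ = f x * (∫ u in (-r)..(1:ℝ), g u) + f x * ∫ u in (1:ℝ)..x, g u := by ring
        _ = _ := by rw [hMain x hx]
    have hadd := intervalIntegral.integral_add (a := (1:ℝ)) (b := r) (μ := volume)
      (f := fun v => f v * (∫ u in (-r)..(1:ℝ), g u))
      (g := fun v => (1 - Real.exp (capl * (1 - v))) / capl)
      ((hfc.mul continuous_const).intervalIntegrable _ _)
      (hmcont.intervalIntegrable _ _)
    rw [intervalIntegral.integral_congr h1, hadd,
      intervalIntegral.integral_mul_const]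
  -- the three pieces
  have hA0 : 0 ≤ c * ∫ v in (0:ℝ)..1, f v * ∫ u in (-r)..v, g u :=
    mul_nonneg hc0.le hX0
  have hA1 : c * (∫ v in (0:ℝ)..1, f v * ∫ u in (-r)..v, g u)
      ≤ (E / aminus + 4 * E ^ 2) * κ ^ 2 := by
    have h1 : c * (∫ v in (0:ℝ)..1, f v * ∫ u in (-r)..v, g u)
        ≤ c * (E * (1 / cam + 2 * E)) := mul_le_mul_of_nonneg_left hXb hc0.le
    have h2 : c * (E * (1 / cam + 2 * E)) = E / aminus + 2 * c * E ^ 2 := by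
      rw [hcam, hc]; field_simp
    have h3 : E / aminus + 2 * c * E ^ 2 ≤ (E / aminus + 4 * E ^ 2) * κ ^ 2 := by
      nlinarith [mul_nonneg (div_nonneg hE0.le ham.le) (sub_nonneg.2 hκ2),
        mul_nonneg (sq_nonneg E) (sub_nonneg.2 hκ2),
        mul_nonneg (sq_nonneg E) (sub_nonneg.2 hc2)]
    linarith
  have hB0 : 0 ≤ c * ((∫ v in (1:ℝ)..r, f v) * ∫ u in (-r)..(1:ℝ), g u) :=
    mul_nonneg hc0.le (mul_nonneg hI0 hJ0)
  have hB1 : c * ((∫ v in (1:ℝ)..r, f v) * ∫ u in (-r)..(1:ℝ), g u)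
      ≤ (E / (aminus * aplus) + 2 * E ^ 2 / aplus) * κ ^ 2 := by
    have h1 : (∫ v in (1:ℝ)..r, f v) * (∫ u in (-r)..(1:ℝ), g u)
        ≤ (E / capl) * (1 / cam + 2 * E) :=
      mul_le_mul hIb hJb hJ0 (by positivity)
    have h2 : c * ((∫ v in (1:ℝ)..r, f v) * ∫ u in (-r)..(1:ℝ), g u)
        ≤ c * ((E / capl) * (1 / cam + 2 * E)) := mul_le_mul_of_nonneg_left h1 hc0.le
    have h3 : c * ((E / capl) * (1 / cam + 2 * E))
        = (E / (aminus * aplus)) * (κ ^ 2 / 2) + 2 * (E ^ 2 / aplus) := by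
      rw [hcapl, hcam, hc]; field_simp
    have hu : (0:ℝ) ≤ E / (aminus * aplus) := by positivity
    have hw : (0:ℝ) ≤ E ^ 2 / aplus := by positivity
    have h4 : (E / (aminus * aplus)) * (κ ^ 2 / 2) + 2 * (E ^ 2 / aplus)
        ≤ (E / (aminus * aplus) + 2 * E ^ 2 / aplus) * κ ^ 2 := by
      rw [show E / (aminus * aplus) + 2 * E ^ 2 / aplus
          = E / (aminus * aplus) + 2 * (E ^ 2 / aplus) by ring]
      generalize E / (aminus * aplus) = u2 at hu ⊢
      generalize E ^ 2 / aplus = w2 at hw ⊢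
      nlinarith [mul_nonneg hu hκ2pos.le, mul_nonneg hw (sub_nonneg.2 hκ2)]
    linarith
  -- put everything together
  have decompose : c * (∫ v in (0:ℝ)..r, f v * ∫ u in (-r)..v, g u)
      = c * (∫ v in (0:ℝ)..1, f v * ∫ u in (-r)..v, g u)
        + c * ((∫ v in (1:ℝ)..r, f v) * ∫ u in (-r)..(1:ℝ), g u)
        + c * ∫ v in (1:ℝ)..r, (1 - Real.exp (capl * (1 - v))) / capl := by
    rw [hsplit0r, hmid]; ring
  rw [decompose, abs_le]
  constructor
  · have hexpand : (E/aminus + 4*E^2 + E/(aminus*aplus) + 2*E^2/aplus + 1/aplus^2 + 1) * κ^2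
        = (E/aminus + 4*E^2 + E/(aminus*aplus) + 2*E^2/aplus + 1) * κ^2
          + 1/aplus^2 * κ^2 := by ring
    have hrest : 0 ≤ (E/aminus + 4*E^2 + E/(aminus*aplus) + 2*E^2/aplus + 1) * κ^2 := by
      positivity
    have hp : κ^2/aplus^2 = 1/aplus^2 * κ^2 := by ring
    linarith [hA0, hB0, hMlo]
  · have hexpand : (E/aminus + 4*E^2 + E/(aminus*aplus) + 2*E^2/aplus + 1/aplus^2 + 1) * κ^2
        = (E/aminus + 4*E^2) * κ^2 + (E/(aminus*aplus) + 2*E^2/aplus) * κ^2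
          + (1/aplus^2 + 1) * κ^2 := by ring
    have hrest : 0 ≤ (1/aplus^2 + 1) * κ^2 := by positivity
    linarith [hA1, hB1, hMhi]
end

section
/- Suppose a⁻ > 0 and a⁺ > 0, fix r > 1, and let ΔV = max{ V(v) − V(u) : −r ≤ u ≤ v ≤ r, v ≥ 0 }. If ΔV > 0 (i.e. the potential V has a well), then lim_{κ → 0⁺} (κ²/2)·log T̃₀(κ) = ΔV; in particular T̃₀(κ) is exponentially large as κ → 0⁺. -/
open MeasureTheory Real Set Filter

private lemma stmt12_aux (c : ℝ) (hc : 0 < c) :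
    Filter.Tendsto (fun κ : ℝ => κ ^ 2 / 2 * Real.log (c / κ ^ 2))
      (nhdsWithin 0 (Set.Ioi 0)) (nhds 0) := by
  have h1 : Filter.Tendsto (fun κ : ℝ => Real.log κ * κ ^ (2:ℝ))
      (nhdsWithin 0 (Set.Ioi 0)) (nhds 0) :=
    tendsto_log_mul_rpow_nhdsGT_zero two_pos
  have h2 : Filter.Tendsto (fun κ : ℝ => κ ^ 2 / 2 * Real.log c)
      (nhdsWithin 0 (Set.Ioi 0)) (nhds 0) := by
    have hcont : Continuous (fun κ : ℝ => κ ^ 2 / 2 * Real.log c) := by continuity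
    have := (hcont.tendsto 0).mono_left
      (nhdsWithin_le_nhds (s := Set.Ioi (0:ℝ)))
    simpa using this
  have h3 := h2.sub h1
  rw [sub_zero] at h3
  apply h3.congr'
  filter_upwards [self_mem_nhdsWithin] with κ hκ
  have hκ0 : (0:ℝ) < κ := hκ
  rw [Real.log_div (ne_of_gt hc) (by positivity), Real.log_pow,
    show κ ^ (2:ℝ) = κ ^ 2 by rw [← Real.rpow_natCast κ 2]; norm_num]
  push_cast
  ring

/-- If the potential has a well (`ΔV > 0`) then the mean escape time `T̃₀(κ)` is
exponentially large as `κ → 0⁺`, with log-asymptotics `(κ²/2) log T̃₀(κ) → ΔV`. -/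
theorem stmt12
    (aminus aplus : ℝ) (A : ℝ → ℝ)
    (hAcont : ContinuousOn A (Set.Icc (-1) 1))
    (hAm : A (-1) = aminus) (hAp : A 1 = aplus)
    (φ : ℝ → ℝ)
    (hφ : ∀ u : ℝ, φ u = if u ≤ -1 then aminus else if u < 1 then A u else aplus)
    (V : ℝ → ℝ)
    (hV : ∀ x : ℝ, V x = -∫ v in (-1:ℝ)..x, φ v)
    (ham : 0 < aminus) (hap : 0 < aplus)
    (r : ℝ) (hr : 1 < r)
    (ΔV : ℝ)
    (hΔV : IsGreatest
      {d : ℝ | ∃ u v : ℝ, -r ≤ u ∧ u ≤ v ∧ v ≤ r ∧ 0 ≤ v ∧ d = V v - V u} ΔV)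
    (hΔVpos : 0 < ΔV) :
    Filter.Tendsto
      (fun κ : ℝ => κ ^ 2 / 2 * Real.log
        (2 / κ ^ 2 * ∫ v in (0:ℝ)..r, Real.exp (2 * V v / κ ^ 2) *
          ∫ u in (-r)..v, Real.exp (-2 * V u / κ ^ 2)))
      (nhdsWithin 0 (Set.Ioi 0)) (nhds ΔV) := by
  have hr0 : (0:ℝ) < r := lt_trans one_pos hr
  -- continuity of φ
  have hφc : Continuous φ := by
    have hproj : Continuous fun u : ℝ => max (-1) (min 1 u) :=
      continuous_const.max (continuous_const.min continuous_id)
    have hmem : ∀ u : ℝ, max (-1) (min 1 u) ∈ Set.Icc (-1:ℝ) 1 := fun u =>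
      ⟨le_max_left _ _, max_le (by norm_num) (min_le_left _ _)⟩
    have h1 : Continuous fun u : ℝ => A (max (-1) (min 1 u)) :=
      hAcont.comp_continuous hproj hmem
    apply h1.congr
    intro u
    rw [hφ]
    rcases le_or_gt u (-1) with h | h
    · rw [if_pos h, min_eq_right (le_trans h (by norm_num)), max_eq_left h, hAm]
    · rw [if_neg (not_le.2 h)]
      rcases lt_or_ge u 1 with h2 | h2
      · rw [if_pos h2, min_eq_right h2.le, max_eq_right h.le]
      · rw [if_neg (not_lt.2 h2), min_eq_left h2,
          show max (-1:ℝ) 1 = 1 by norm_num, hAp]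
  -- continuity of V
  have hVc : Continuous V := by
    have h1 : Continuous fun x : ℝ => ∫ v in (-1:ℝ)..x, φ v :=
      intervalIntegral.continuous_primitive
        (fun a b => hφc.intervalIntegrable a b) (-1)
    exact h1.neg.congr fun x => (hV x).symm
  obtain ⟨⟨u₀, v₀, hu₀r, huv₀, hv₀r, hv₀0, hΔeq⟩, hub⟩ := hΔV
  have hle : ∀ u v : ℝ, -r ≤ u → u ≤ v → v ≤ r → 0 ≤ v → V v - V u ≤ ΔV :=
    fun u v h1 h2 h3 h4 => hub ⟨u, v, h1, h2, h3, h4, rfl⟩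
  -- notation
  set G : ℝ → ℝ → ℝ := fun κ v => ∫ u in (-r)..v, Real.exp (-2 * V u / κ ^ 2)
    with hGdef
  set I : ℝ → ℝ := fun κ =>
    ∫ v in (0:ℝ)..r, Real.exp (2 * V v / κ ^ 2) * G κ v with hIdef
  have hfc : ∀ κ : ℝ, Continuous fun u => Real.exp (-2 * V u / κ ^ 2) :=
    fun κ => Real.continuous_exp.comp ((continuous_const.mul hVc).div_const _)
  have hGc : ∀ κ : ℝ, Continuous (G κ) := fun κ =>
    intervalIntegral.continuous_primitive
      (fun a b => (hfc κ).intervalIntegrable a b) (-r)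
  have hHc : ∀ κ : ℝ, Continuous fun v => Real.exp (2 * V v / κ ^ 2) * G κ v :=
    fun κ => (Real.continuous_exp.comp
      ((continuous_const.mul hVc).div_const _)).mul (hGc κ)
  have hGpos : ∀ κ : ℝ, ∀ v : ℝ, -r < v → 0 < G κ v := fun κ v hv =>
    intervalIntegral.intervalIntegral_pos_of_pos ((hfc κ).intervalIntegrable _ _)
      (fun u => Real.exp_pos _) hv
  have hGnonneg : ∀ κ : ℝ, ∀ v : ℝ, -r ≤ v → 0 ≤ G κ v := fun κ v hv =>
    intervalIntegral.integral_nonneg hv (fun u _ => (Real.exp_pos _).le)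
  have hIpos : ∀ κ : ℝ, 0 < I κ := by
    intro κ
    apply intervalIntegral.intervalIntegral_pos_of_pos_on
      ((hHc κ).intervalIntegrable _ _) ?_ hr0
    intro v hv
    exact mul_pos (Real.exp_pos _) (hGpos κ v (by linarith [hv.1]))
  -- upper bound on I
  have hIub : ∀ κ : ℝ, κ ≠ 0 → I κ ≤ 2 * r ^ 2 * Real.exp (2 * ΔV / κ ^ 2) := by
    intro κ hκ
    have hκ2 : (0:ℝ) < κ ^ 2 := by positivity
    have step1 : ∀ v ∈ Set.Icc (0:ℝ) r,
        Real.exp (2 * V v / κ ^ 2) * G κ v ≤ 2 * r * Real.exp (2 * ΔV / κ ^ 2) := by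
      intro v hv
      have hGle : G κ v ≤ (v + r) * Real.exp ((2 * ΔV - 2 * V v) / κ ^ 2) := by
        have h1 : G κ v ≤ ∫ _ in (-r)..v, Real.exp ((2 * ΔV - 2 * V v) / κ ^ 2) := by
          apply intervalIntegral.integral_mono_on (by linarith [hv.1] : -r ≤ v)
            ((hfc κ).intervalIntegrable _ _) (intervalIntegrable_const)
          intro u hu
          apply Real.exp_le_exp.2
          gcongr
          have := hle u v hu.1 hu.2 hv.2 hv.1
          linarith
        rw [intervalIntegral.integral_const, smul_eq_mul] at h1
        calc G κ v ≤ (v - -r) * Real.exp ((2 * ΔV - 2 * V v) / κ ^ 2) := h1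
          _ = (v + r) * Real.exp ((2 * ΔV - 2 * V v) / κ ^ 2) := by ring
      calc Real.exp (2 * V v / κ ^ 2) * G κ v
          ≤ Real.exp (2 * V v / κ ^ 2) *
            ((v + r) * Real.exp ((2 * ΔV - 2 * V v) / κ ^ 2)) := by
            exact mul_le_mul_of_nonneg_left hGle (Real.exp_pos _).le
        _ = (v + r) * Real.exp (2 * ΔV / κ ^ 2) := by
            rw [show 2 * ΔV / κ ^ 2
                = 2 * V v / κ ^ 2 + (2 * ΔV - 2 * V v) / κ ^ 2 by
              rw [← add_div]; ring_nf, Real.exp_add]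
            ring
        _ ≤ 2 * r * Real.exp (2 * ΔV / κ ^ 2) := by
            apply mul_le_mul_of_nonneg_right _ (Real.exp_pos _).le
            linarith [hv.2, hv.1, hr0]
    calc I κ ≤ ∫ _ in (0:ℝ)..r, 2 * r * Real.exp (2 * ΔV / κ ^ 2) :=
          intervalIntegral.integral_mono_on hr0.le
            ((hHc κ).intervalIntegrable _ _) intervalIntegrable_const step1
      _ = 2 * r ^ 2 * Real.exp (2 * ΔV / κ ^ 2) := by
          rw [intervalIntegral.integral_const, smul_eq_mul]
          ring
  -- lower bound on I
  have key : ∀ δ : ℝ, 0 < δ → ∃ η : ℝ, 0 < η ∧ ∀ κ : ℝ, 0 < κ →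
      η ^ 2 * Real.exp (2 * (ΔV - 2 * δ) / κ ^ 2) ≤ I κ := by
    intro δ hδ
    have huv₀' : u₀ < v₀ := by
      rcases lt_or_eq_of_le huv₀ with h | h
      · exact h
      · exfalso; rw [h] at hΔeq; simp at hΔeq; linarith
    obtain ⟨η₁, hη₁, hVu⟩ := Metric.continuous_iff.1 hVc u₀ δ hδ
    obtain ⟨η₂, hη₂, hVv⟩ := Metric.continuous_iff.1 hVc v₀ δ hδ
    set η := min (min (η₁ / 2) (η₂ / 2)) (min ((v₀ - u₀) / 3) r) with hηdef
    have hη : 0 < η := by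
      apply lt_min (lt_min (by linarith) (by linarith)) (lt_min (by linarith) hr0)
    have hη3 : 3 * η ≤ v₀ - u₀ := by
      have := min_le_right (min (η₁ / 2) (η₂ / 2)) (min ((v₀ - u₀) / 3) r)
      have := min_le_left ((v₀ - u₀) / 3) r
      have hle' : η ≤ (v₀ - u₀) / 3 := le_trans (by assumption) (by assumption)
      linarith
    have hηr : η ≤ r :=
      le_trans (min_le_right _ _) (min_le_right _ _)
    have hVu' : ∀ x : ℝ, |x - u₀| ≤ η → |V x - V u₀| < δ := by
      intro x hx
      have : η ≤ η₁ / 2 := le_trans (min_le_left _ _) (min_le_left _ _)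
      rw [← Real.dist_eq]
      exact hVu x (by rw [Real.dist_eq]; linarith)
    have hVv' : ∀ x : ℝ, |x - v₀| ≤ η → |V x - V v₀| < δ := by
      intro x hx
      have : η ≤ η₂ / 2 := le_trans (min_le_left _ _) (min_le_right _ _)
      rw [← Real.dist_eq]
      exact hVv x (by rw [Real.dist_eq]; linarith)
    set v₁ := min v₀ (r - η) with hv₁def
    have hv₁0 : 0 ≤ v₁ := le_min hv₀0 (by linarith)
    have hv₁r : v₁ + η ≤ r := by
      have := min_le_right v₀ (r - η); linarith
    have hv₀mem : v₁ ≤ v₀ ∧ v₀ ≤ v₁ + η := by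
      constructor
      · exact min_le_left _ _
      · rcases min_cases v₀ (r - η) with ⟨h1, _⟩ | ⟨h1, _⟩ <;> rw [hv₁def, h1] <;> linarith
    have hu₀v₁ : u₀ + η ≤ v₁ := by
      have := hv₀mem.2; linarith
    refine ⟨η, hη, fun κ hκ => ?_⟩
    have hκ2 : (0:ℝ) < κ ^ 2 := by positivity
    -- inner bound
    have hinner : ∀ v ∈ Set.Icc v₁ (v₁ + η),
        η * Real.exp (-2 * (V u₀ + δ) / κ ^ 2) ≤ G κ v := by
      intro v hv
      have h1 : (∫ u in u₀..(u₀ + η), Real.exp (-2 * V u / κ ^ 2)) ≤ G κ v := by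
        apply intervalIntegral.integral_mono_interval hu₀r (by linarith)
          (by linarith [hv.1])
        · filter_upwards with u using (Real.exp_pos _).le
        · exact (hfc κ).intervalIntegrable _ _
      have h2 : (∫ _ in u₀..(u₀ + η), Real.exp (-2 * (V u₀ + δ) / κ ^ 2)) ≤
          ∫ u in u₀..(u₀ + η), Real.exp (-2 * V u / κ ^ 2) := by
        apply intervalIntegral.integral_mono_on (by linarith) intervalIntegrable_const
          ((hfc κ).intervalIntegrable _ _)
        intro u hu
        apply Real.exp_le_exp.2
        apply (div_le_div_iff_of_pos_right hκ2).2
        have : |V u - V u₀| < δ := by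
          apply hVu'
          rw [abs_le]
          constructor <;> [linarith [hu.1]; linarith [hu.2]]
        have := abs_lt.1 this
        nlinarith [this.2]
      rw [intervalIntegral.integral_const, smul_eq_mul] at h2
      calc η * Real.exp (-2 * (V u₀ + δ) / κ ^ 2)
          = (u₀ + η - u₀) * Real.exp (-2 * (V u₀ + δ) / κ ^ 2) := by ring
        _ ≤ ∫ u in u₀..(u₀ + η), Real.exp (-2 * V u / κ ^ 2) := h2
        _ ≤ G κ v := h1
    -- outer bound
    have houter : (∫ _ in v₁..(v₁ + η),
        Real.exp (2 * (V v₀ - δ) / κ ^ 2) * (η * Real.exp (-2 * (V u₀ + δ) / κ ^ 2)))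
        ≤ I κ := by
      have h1 : (∫ v in v₁..(v₁ + η), Real.exp (2 * V v / κ ^ 2) * G κ v) ≤ I κ := by
        apply intervalIntegral.integral_mono_interval hv₁0 (by linarith) hv₁r
        · rw [Filter.EventuallyLE]
          apply (ae_restrict_iff' measurableSet_Ioc).2
          filter_upwards with v hv
          exact mul_nonneg (Real.exp_pos _).le (hGnonneg κ v (by linarith [hv.1]))
        · exact (hHc κ).intervalIntegrable _ _
      refine le_trans ?_ h1
      apply intervalIntegral.integral_mono_on (by linarith) intervalIntegrable_const
        ((hHc κ).intervalIntegrable _ _)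
      intro v hv
      apply mul_le_mul _ (hinner v hv) (by positivity) (Real.exp_pos _).le
      apply Real.exp_le_exp.2
      apply (div_le_div_iff_of_pos_right hκ2).2
      have : |V v - V v₀| < δ := by
        apply hVv'
        rw [abs_le]
        constructor <;> [linarith [hv.1, hv₀mem.2]; linarith [hv.2, hv₀mem.1]]
      have := abs_lt.1 this
      nlinarith [this.1]
    rw [intervalIntegral.integral_const, smul_eq_mul] at houter
    refine le_trans (le_of_eq ?_) houter
    have hsum : 2 * (ΔV - 2 * δ) / κ ^ 2
        = 2 * (V v₀ - δ) / κ ^ 2 + -2 * (V u₀ + δ) / κ ^ 2 := by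
      rw [← add_div]
      congr 1
      rw [hΔeq]; ring
    rw [hsum, Real.exp_add]
    ring
  -- main squeeze
  rw [tendsto_order]
  constructor
  · -- lower: ∀ b < ΔV eventually b < f κ
    intro b hb
    set δ := (ΔV - b) / 3 with hδdef
    have hδ : 0 < δ := by rw [hδdef]; linarith
    obtain ⟨η, hη, hkey⟩ := key δ hδ
    have htend : Filter.Tendsto
        (fun κ : ℝ => (ΔV - 2 * δ) + κ ^ 2 / 2 * Real.log (2 * η ^ 2 / κ ^ 2))
        (nhdsWithin 0 (Set.Ioi 0)) (nhds (ΔV - 2 * δ)) := by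
      have := (stmt12_aux (2 * η ^ 2) (by positivity)).const_add (ΔV - 2 * δ)
      simpa using this
    have hbd : b < ΔV - 2 * δ := by rw [hδdef]; linarith
    filter_upwards [htend.eventually_const_lt hbd, self_mem_nhdsWithin]
      with κ hκ1 hκmem
    have hκ : (0:ℝ) < κ := hκmem
    have hκ2 : (0:ℝ) < κ ^ 2 := by positivity
    refine lt_of_lt_of_le hκ1 ?_
    have harg : 2 * η ^ 2 / κ ^ 2 * Real.exp (2 * (ΔV - 2 * δ) / κ ^ 2)
        ≤ 2 / κ ^ 2 * I κ := by
      have := hkey κ hκ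
      calc 2 * η ^ 2 / κ ^ 2 * Real.exp (2 * (ΔV - 2 * δ) / κ ^ 2)
          = 2 / κ ^ 2 * (η ^ 2 * Real.exp (2 * (ΔV - 2 * δ) / κ ^ 2)) := by ring
        _ ≤ 2 / κ ^ 2 * I κ := by
            apply mul_le_mul_of_nonneg_left this (by positivity)
    have hlogle : Real.log (2 * η ^ 2 / κ ^ 2 * Real.exp (2 * (ΔV - 2 * δ) / κ ^ 2))
        ≤ Real.log (2 / κ ^ 2 * I κ) :=
      Real.log_le_log (by positivity) harg
    have heq : Real.log (2 * η ^ 2 / κ ^ 2 * Real.exp (2 * (ΔV - 2 * δ) / κ ^ 2))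
        = Real.log (2 * η ^ 2 / κ ^ 2) + 2 * (ΔV - 2 * δ) / κ ^ 2 := by
      rw [Real.log_mul (by positivity) (Real.exp_pos _).ne', Real.log_exp]
    calc (ΔV - 2 * δ) + κ ^ 2 / 2 * Real.log (2 * η ^ 2 / κ ^ 2)
        = κ ^ 2 / 2 * (Real.log (2 * η ^ 2 / κ ^ 2) + 2 * (ΔV - 2 * δ) / κ ^ 2) := by
          have h : κ ^ 2 / 2 * (2 * (ΔV - 2 * δ) / κ ^ 2) = ΔV - 2 * δ := by
            field_simp
          rw [mul_add, h]
          ring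
      _ ≤ κ ^ 2 / 2 * Real.log (2 / κ ^ 2 * I κ) := by
          apply mul_le_mul_of_nonneg_left _ (by positivity)
          rw [← heq]; exact hlogle
  · -- upper
    intro b hb
    have htend : Filter.Tendsto
        (fun κ : ℝ => ΔV + κ ^ 2 / 2 * Real.log (4 * r ^ 2 / κ ^ 2))
        (nhdsWithin 0 (Set.Ioi 0)) (nhds ΔV) := by
      have := (stmt12_aux (4 * r ^ 2) (by positivity)).const_add ΔV
      simpa using this
    filter_upwards [htend.eventually_lt_const hb, self_mem_nhdsWithin]
      with κ hκ1 hκmem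
    have hκ : (0:ℝ) < κ := hκmem
    have hκ2 : (0:ℝ) < κ ^ 2 := by positivity
    refine lt_of_le_of_lt ?_ hκ1
    have harg : 2 / κ ^ 2 * I κ
        ≤ 4 * r ^ 2 / κ ^ 2 * Real.exp (2 * ΔV / κ ^ 2) := by
      have := hIub κ hκ.ne'
      calc 2 / κ ^ 2 * I κ ≤ 2 / κ ^ 2 * (2 * r ^ 2 * Real.exp (2 * ΔV / κ ^ 2)) :=
            mul_le_mul_of_nonneg_left this (by positivity)
        _ = 4 * r ^ 2 / κ ^ 2 * Real.exp (2 * ΔV / κ ^ 2) := by ring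
    have hlogle : Real.log (2 / κ ^ 2 * I κ)
        ≤ Real.log (4 * r ^ 2 / κ ^ 2 * Real.exp (2 * ΔV / κ ^ 2)) :=
      Real.log_le_log (mul_pos (by positivity) (hIpos κ)) harg
    have heq : Real.log (4 * r ^ 2 / κ ^ 2 * Real.exp (2 * ΔV / κ ^ 2))
        = Real.log (4 * r ^ 2 / κ ^ 2) + 2 * ΔV / κ ^ 2 := by
      rw [Real.log_mul (by positivity) (Real.exp_pos _).ne', Real.log_exp]
    calc κ ^ 2 / 2 * Real.log (2 / κ ^ 2 * I κ)
        ≤ κ ^ 2 / 2 * (Real.log (4 * r ^ 2 / κ ^ 2) + 2 * ΔV / κ ^ 2) := by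
          apply mul_le_mul_of_nonneg_left _ (by positivity)
          rw [← heq]; exact hlogle
      _ = ΔV + κ ^ 2 / 2 * Real.log (4 * r ^ 2 / κ ^ 2) := by
          have h : κ ^ 2 / 2 * (2 * ΔV / κ ^ 2) = ΔV := by
            field_simp
          rw [mul_add, h]
          ring
end
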